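/- arXiv:1809.04627 — 5 statements merged into one kernel-verified Lean document; each statement's English description precedes it below -/
import Mathlib

section
/- Every additive subgroup A of ℚ containing 1 is generated by the set of fractions 1/p^{h_p} where p ranges over the primes and h_p ∈ ℕ ∪ {∞} is the supremum of the exponents n such that 1/p^n ∈ A (with h_p = ∞ meaning all 1/p^n are generators). -/
/-- The p-height of a subgroup `A` of `ℚ` (containing 1): the supremum in `ℕ∞`
of the exponents `n` with `1/p^n ∈ A`. -/
noncomputable def ratHeight (A : AddSubgroup ℚ) (p : ℕ) : ℕ∞ :=
  ⨆ n ∈ {n : ℕ | (1 : ℚ) / p ^ n ∈ A}, (n : ℕ∞)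

lemma ratHeight_downward (A : AddSubgroup ℚ) {p : ℕ} (hp : 0 < p) {m n : ℕ} (hmn : m ≤ n)
    (h : (1 : ℚ) / (p : ℚ) ^ n ∈ A) : (1 : ℚ) / (p : ℚ) ^ m ∈ A := by
  have hp' : (p : ℚ) ≠ 0 := Nat.cast_ne_zero.mpr hp.ne'
  have key : (1 : ℚ) / (p : ℚ) ^ m = (p ^ (n - m) : ℕ) • ((1 : ℚ) / (p : ℚ) ^ n) := by
    rw [nsmul_eq_mul]
    push_cast
    rw [mul_one_div, div_eq_div_iff (by positivity) (by positivity), one_mul, ← pow_add]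
    congr 1
    omega
  rw [key]
  exact AddSubgroup.nsmul_mem A h _

lemma height_mem (A : AddSubgroup ℚ) (h1 : (1 : ℚ) ∈ A) {p n : ℕ} (hp : p.Prime)
    (hle : (n : ℕ∞) ≤ ratHeight A p) : (1 : ℚ) / (p : ℚ) ^ n ∈ A := by
  by_contra hn
  have h0 : n ≠ 0 := by rintro rfl; simp at hn; exact hn h1
  have hub : ratHeight A p ≤ ((n - 1 : ℕ) : ℕ∞) := by
    refine iSup₂_le fun k hk => ?_
    have hkn : k ≤ n - 1 := by
      by_contra hkn
      exact hn (ratHeight_downward A hp.pos (by omega) hk)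
    exact_mod_cast hkn
  have := hle.trans hub
  have : n ≤ n - 1 := by exact_mod_cast this
  omega

lemma inv_mem_closure (A : AddSubgroup ℚ) (h1 : (1 : ℚ) ∈ A) :
    ∀ b : ℕ, 0 < b → (1 : ℚ) / b ∈ A →
      (1 : ℚ) / b ∈ AddSubgroup.closure
        {x : ℚ | ∃ p n : ℕ, p.Prime ∧ (n : ℕ∞) ≤ ratHeight A p ∧ x = 1 / p ^ n} := by
  intro b
  induction b using Nat.strong_induction_on with
  | _ b ih =>
    intro hb hbA
    by_cases hb1 : b = 1
    · subst hb1
      simp only [Nat.cast_one, div_one]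
      exact AddSubgroup.subset_closure ⟨2, 0, Nat.prime_two, by simp, by simp⟩
    set p := b.minFac with hpdef
    have hp : p.Prime := Nat.minFac_prime hb1
    set k := b.factorization p with hkdef
    have hk : 0 < k := hp.factorization_pos_of_dvd (by omega) (Nat.minFac_dvd b)
    have hdvd : p ^ k ∣ b := Nat.ordProj_dvd b p
    set m := b / p ^ k with hm
    have hbm : b = p ^ k * m := (Nat.mul_div_cancel' hdvd).symm
    have hm0 : 0 < m := by
      rcases Nat.eq_zero_or_pos m with h | h
      · rw [h, mul_zero] at hbm; omega
      · exact h
    have hpm : ¬ p ∣ m := Nat.not_dvd_ordCompl hp (by omega)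
    have hcop : Nat.Coprime (p ^ k) m := Nat.Coprime.pow_left _ ((hp.coprime_iff_not_dvd).mpr hpm)
    have hpk2 : 2 ≤ p ^ k := by
      calc 2 = 2 ^ 1 := rfl
      _ ≤ p ^ k := Nat.pow_le_pow_left hp.two_le k |>.trans' (Nat.pow_le_pow_right (by norm_num) hk) |>.trans (le_refl _)
    have hmlt : m < b := by nlinarith
    have hp' : (p : ℚ) ≠ 0 := Nat.cast_ne_zero.mpr hp.pos.ne'
    have hm' : (m : ℚ) ≠ 0 := Nat.cast_ne_zero.mpr hm0.ne'
    have hbq : (b : ℚ) = (p : ℚ) ^ k * m := by exact_mod_cast congrArg (Nat.cast : ℕ → ℚ) hbm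
    have h1m : (1 : ℚ) / m ∈ A := by
      have : (1 : ℚ) / m = (p ^ k : ℕ) • ((1 : ℚ) / b) := by
        rw [nsmul_eq_mul]; push_cast; rw [hbq]; field_simp
      rw [this]; exact AddSubgroup.nsmul_mem A hbA _
    have h1pk : (1 : ℚ) / (p : ℚ) ^ k ∈ A := by
      have : (1 : ℚ) / (p : ℚ) ^ k = m • ((1 : ℚ) / b) := by
        rw [nsmul_eq_mul]; rw [hbq]; field_simp
      rw [this]; exact AddSubgroup.nsmul_mem A hbA _
    have hgen : (1 : ℚ) / (p : ℚ) ^ k ∈ AddSubgroup.closure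
        {x : ℚ | ∃ p n : ℕ, p.Prime ∧ (n : ℕ∞) ≤ ratHeight A p ∧ x = 1 / p ^ n} := by
      refine AddSubgroup.subset_closure ⟨p, k, hp, ?_, rfl⟩
      exact le_iSup₂ (f := fun (n : ℕ) (_ : n ∈ {n : ℕ | (1 : ℚ) / p ^ n ∈ A}) => (n : ℕ∞)) k h1pk
    have hmc := ih m hmlt hm0 h1m
    -- Bezout
    set x := Nat.gcdA (p ^ k) m with hx
    set y := Nat.gcdB (p ^ k) m with hy
    have hbez : (1 : ℤ) = (p : ℤ) ^ k * x + m * y := by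
      have := Nat.gcd_eq_gcd_ab (p ^ k) m
      rw [hcop] at this
      push_cast at this ⊢
      linarith [this]
    have hsum : (1 : ℚ) / b = x • ((1 : ℚ) / m) + y • ((1 : ℚ) / (p : ℚ) ^ k) := by
      have hbezq : (1 : ℚ) = (p : ℚ) ^ k * x + m * y := by exact_mod_cast hbez
      rw [zsmul_eq_mul, zsmul_eq_mul, hbq]
      field_simp
      linear_combination hbezq
    rw [hsum]
    exact AddSubgroup.add_mem _ (AddSubgroup.zsmul_mem _ hmc x) (AddSubgroup.zsmul_mem _ hgen y)

/-- Every additive subgroup of `ℚ` containing `1` is generated by the fractions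
`1/p^n` for primes `p` and exponents `n ≤ h_p(A)` (all `n` when `h_p(A) = ∞`). -/
theorem rational_group_generated_by_prime_power_fractions
    (A : AddSubgroup ℚ) (h1 : (1 : ℚ) ∈ A) :
    A = AddSubgroup.closure
      {x : ℚ | ∃ p n : ℕ, p.Prime ∧ (n : ℕ∞) ≤ ratHeight A p ∧ x = 1 / p ^ n} := by
  apply le_antisymm
  · intro q hq
    have hden : (1 : ℚ) / q.den ∈ A := by
      have hcop : Int.gcd q.num q.den = 1 := q.reduced
      set x := Int.gcdA q.num q.den with hx
      set y := Int.gcdB q.num q.den with hy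
      have hbez : (1 : ℤ) = q.num * x + q.den * y := by
        have := Int.gcd_eq_gcd_ab q.num q.den
        rw [hcop] at this
        push_cast at this ⊢
        linarith [this]
      have hd' : (q.den : ℚ) ≠ 0 := Nat.cast_ne_zero.mpr q.pos.ne'
      have : (1 : ℚ) / q.den = x • q + y • (1 : ℚ) := by
        have hbezq : (1 : ℚ) = q.num * x + q.den * y := by exact_mod_cast hbez
        have hnum : q * (q.den : ℚ) = q.num := Rat.mul_den_eq_num q
        rw [zsmul_eq_mul, zsmul_eq_mul, mul_one, div_eq_iff hd']
        linear_combination hbezq - (x : ℚ) * hnum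
      rw [this]
      exact AddSubgroup.add_mem _ (AddSubgroup.zsmul_mem _ hq x) (AddSubgroup.zsmul_mem _ h1 y)
    have hc := inv_mem_closure A h1 q.den q.pos hden
    have hqeq : q = q.num • ((1 : ℚ) / q.den) := by
      rw [zsmul_eq_mul, mul_one_div, Rat.num_div_den]
    rw [hqeq]
    exact AddSubgroup.zsmul_mem _ hc _
  · rw [AddSubgroup.closure_le]
    rintro x ⟨p, n, hp, hle, rfl⟩
    exact height_mem A h1 hp hle
end

section
/- A rational group A (additive subgroup of ℚ containing 1) is isomorphic to ℤ if and only if the set of primes p with h_p(A) ≥ 1 is finite and h_p(A) < ∞ for all primes p. -/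
open AddSubgroup


lemma le_ratHeight {A : AddSubgroup ℚ} {p n : ℕ} (h : (1:ℚ) / p ^ n ∈ A) :
    (n : ℕ∞) ≤ ratHeight A p := le_biSup _ h

lemma ratHeight_le {A : AddSubgroup ℚ} {p : ℕ} {N : ℕ∞}
    (h : ∀ n : ℕ, (1:ℚ) / p ^ n ∈ A → (n : ℕ∞) ≤ N) : ratHeight A p ≤ N :=
  iSup₂_le h

lemma one_div_den_mem {A : AddSubgroup ℚ} (h1 : (1:ℚ) ∈ A) {x : ℚ} (hx : x ∈ A) :
    (1:ℚ) / (x.den : ℚ) ∈ A := by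
  have hcop : IsCoprime x.num (x.den : ℤ) := by
    rw [Int.isCoprime_iff_gcd_eq_one]
    exact x.reduced
  obtain ⟨u, v, huv⟩ := hcop
  have hden : (x.den : ℚ) ≠ 0 := by
    exact_mod_cast x.den_ne_zero
  have key : (1:ℚ) / (x.den : ℚ) = u • x + v • (1:ℚ) := by
    rw [eq_comm, eq_div_iff hden, zsmul_eq_mul, zsmul_eq_mul]
    have hx' : (x.num : ℚ) = x * x.den := by
      have := Rat.num_div_den x
      rwa [div_eq_iff hden] at this
    calc ((u:ℚ) * x + v * 1) * x.den = u * (x * x.den) + v * x.den := by ring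
    _ = u * x.num + v * x.den := by rw [hx']
    _ = 1 := by exact_mod_cast congrArg (fun z : ℤ => (z : ℚ)) huv
  rw [key]
  exact A.add_mem (A.zsmul_mem hx u) (A.zsmul_mem h1 v)

lemma one_div_dvd_mem {A : AddSubgroup ℚ} {b d : ℕ} (hb : (1:ℚ)/(b:ℚ) ∈ A)
    (hd : d ∣ b) (hb0 : b ≠ 0) : (1:ℚ)/(d:ℚ) ∈ A := by
  obtain ⟨c, rfl⟩ := hd
  have hd0 : (d:ℚ) ≠ 0 := by exact_mod_cast fun h => hb0 (by simp [h])
  have hc0 : (c:ℚ) ≠ 0 := by exact_mod_cast fun h => hb0 (by simp [h])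
  have : (c : ℚ) * ((1:ℚ)/((d*c : ℕ):ℚ)) = 1/(d:ℚ) := by
    push_cast
    field_simp
  rw [← this]
  simpa [nsmul_eq_mul] using A.nsmul_mem hb c

lemma one_le_ratHeight_iff {A : AddSubgroup ℚ} {p : ℕ} (hp : p ≠ 0) :
    1 ≤ ratHeight A p ↔ (1:ℚ)/(p:ℚ) ∈ A := by
  constructor
  · intro h
    by_contra hmem
    have : ratHeight A p ≤ 0 := by
      apply ratHeight_le
      intro n hn
      rcases Nat.eq_zero_or_pos n with rfl | hn1
      · simp
      · exfalso
        apply hmem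
        have : (1:ℚ)/((p^n : ℕ):ℚ) ∈ A := by push_cast; exact hn
        have := one_div_dvd_mem this (dvd_pow_self p hn1.ne') (pow_ne_zero n hp)
        exact this
    exact absurd (h.trans this) (by norm_num)
  · intro h
    have : (1:ℚ)/p^1 ∈ A := by rwa [pow_one]
    exact_mod_cast le_ratHeight this

lemma forward_dir (A : AddSubgroup ℚ) (h1 : (1 : ℚ) ∈ A) (e : A ≃+ ℤ) :
    {p : ℕ | p.Prime ∧ 1 ≤ ratHeight A p}.Finite ∧
      ∀ p : ℕ, p.Prime → ratHeight A p ≠ ⊤ := by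
  set g : ℚ := ((e.symm 1 : A) : ℚ) with hg
  have hgen : ∀ x ∈ A, ∃ m : ℤ, x = m • g := by
    intro x hx
    refine ⟨e ⟨x, hx⟩, ?_⟩
    have h2 : (⟨x, hx⟩ : A) = (e (⟨x, hx⟩ : A)) • e.symm 1 := by
      conv_lhs => rw [← e.symm_apply_apply ⟨x, hx⟩]
      rw [← map_zsmul e.symm, smul_eq_mul, mul_one]
    have := congrArg (Subtype.val) h2
    simpa using this
  have hg0 : g ≠ 0 := by
    intro h
    have : e.symm 1 = 0 := by ext; simpa [hg] using h
    have := congrArg e this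
    simp at this
  have key : ∀ p n : ℕ, p ≠ 0 → (1:ℚ) / p ^ n ∈ A → p ^ n ∣ g.den := by
    intro p n hp hmem
    obtain ⟨m, hm⟩ := hgen _ hmem
    have hpQ : ((p:ℚ))^n ≠ 0 := pow_ne_zero n (by exact_mod_cast hp)
    have hgden : (g.den : ℚ) ≠ 0 := by exact_mod_cast g.den_ne_zero
    rw [zsmul_eq_mul, eq_comm, eq_div_iff hpQ] at hm
    -- hm : 1 = m * g * p^n  (hopefully)
    have hnum : (g.num : ℚ) = g * g.den := by
      have := Rat.num_div_den g
      rwa [div_eq_iff hgden] at this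
    have hcast : ((g.den : ℤ) : ℚ) = ((m * g.num * (p:ℤ)^n : ℤ) : ℚ) := by
      push_cast
      calc (g.den : ℚ) = g.den * 1 := by ring
      _ = g.den * ((m:ℚ) * g * (p:ℚ)^n) := by rw [← hm]
      _ = (m:ℚ) * (g * g.den) * (p:ℚ)^n := by ring
      _ = (m:ℚ) * g.num * (p:ℚ)^n := by rw [hnum]
    have hint : (g.den : ℤ) = m * g.num * (p:ℤ)^n := by exact_mod_cast hcast
    have : ((p:ℤ))^n ∣ (g.den : ℤ) := ⟨m * g.num, by rw [hint]; ring⟩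
    have : ((p^n : ℕ) : ℤ) ∣ ((g.den : ℕ) : ℤ) := by push_cast; exact this
    exact_mod_cast this
  constructor
  · apply Set.Finite.subset (Set.finite_Iic g.den)
    rintro p ⟨hp, hh⟩
    have hmem : (1:ℚ)/(p:ℚ) ∈ A := (one_le_ratHeight_iff hp.ne_zero).mp hh
    have : (1:ℚ)/(p:ℚ)^1 ∈ A := by rwa [pow_one]
    have := key p 1 hp.ne_zero this
    rw [pow_one] at this
    exact Nat.le_of_dvd g.pos this
  · intro p hp
    apply ne_top_of_le_ne_top (show ((g.den : ℕ∞) ≠ ⊤) by simp)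
    apply ratHeight_le
    intro n hn
    have hdvd := key p n hp.ne_zero hn
    have h1' : p ^ n ≤ g.den := Nat.le_of_dvd g.pos hdvd
    have h2' : n < p ^ n := Nat.lt_pow_self (n := n) hp.one_lt
    exact_mod_cast Nat.le_of_lt (lt_of_lt_of_le h2' h1')

lemma backward_dir (A : AddSubgroup ℚ) (h1 : (1 : ℚ) ∈ A)
    (hfin : {p : ℕ | p.Prime ∧ 1 ≤ ratHeight A p}.Finite)
    (htop : ∀ p : ℕ, p.Prime → ratHeight A p ≠ ⊤) : Nonempty (A ≃+ ℤ) := by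
  classical
  set P : Finset ℕ := hfin.toFinset with hP
  set N : ℕ := ∏ p ∈ P, p ^ (ratHeight A p).toNat with hNdef
  have hN0 : N ≠ 0 := by
    rw [hNdef]
    apply Finset.prod_ne_zero_iff.mpr
    intro p hp
    have hp' : p.Prime := (hfin.mem_toFinset.mp hp).1
    exact pow_ne_zero _ hp'.ne_zero
  have hbd : ∀ p n : ℕ, p.Prime → (1:ℚ)/(p:ℚ)^n ∈ A → n ≤ (ratHeight A p).toNat := by
    intro p n hp h
    have h2 := le_ratHeight h
    rw [← ENat.coe_toNat (htop p hp)] at h2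
    exact_mod_cast h2
  have hdvd : ∀ x : ℚ, x ∈ A → x.den ∣ N := by
    intro x hx
    rw [← Nat.factorization_le_iff_dvd x.den_ne_zero hN0]
    intro p
    set k := x.den.factorization p with hk
    rcases Nat.eq_zero_or_pos k with hk0 | hk1
    · simp [hk0]
    · have hp : p.Prime := by
        have : p ∈ x.den.factorization.support := Finsupp.mem_support_iff.mpr hk1.ne'
        rw [Nat.support_factorization] at this
        exact Nat.prime_of_mem_primeFactors this
      have hpk : p ^ k ∣ x.den := Nat.ordProj_dvd _ _
      have h1k : (1:ℚ)/((p^k : ℕ):ℚ) ∈ A :=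
        one_div_dvd_mem (one_div_den_mem h1 hx) hpk x.den_ne_zero
      have h1p : (1:ℚ)/(p:ℚ) ∈ A :=
        one_div_dvd_mem h1k (dvd_pow_self p hk1.ne') (pow_ne_zero _ hp.ne_zero)
      have h1k' : (1:ℚ)/(p:ℚ)^k ∈ A := by push_cast at h1k; exact h1k
      have hkle : k ≤ (ratHeight A p).toNat := hbd p k hp h1k'
      have hPmem : p ∈ P := hfin.mem_toFinset.mpr
        ⟨hp, (one_le_ratHeight_iff hp.ne_zero).mpr h1p⟩
      have hdN : p ^ (ratHeight A p).toNat ∣ N :=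
        Finset.dvd_prod_of_mem (fun p => p ^ (ratHeight A p).toNat) hPmem
      have : p ^ k ∣ N := (pow_dvd_pow p hkle).trans hdN
      exact (hp.pow_dvd_iff_le_factorization hN0).mp this
  have hNQ0 : ((N:ℚ)) ≠ 0 := by exact_mod_cast hN0
  have hsub : ∀ x : ℚ, x ∈ A → ∃ m : ℤ, m • ((1:ℚ)/(N:ℚ)) = x := by
    intro x hx
    obtain ⟨c, hc⟩ := hdvd x hx
    have hc0 : (c:ℚ) ≠ 0 := by
      intro h
      apply hN0
      rw [hc]
      have : c = 0 := by exact_mod_cast h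
      simp [this]
    have hden : (x.den : ℚ) ≠ 0 := by exact_mod_cast x.den_ne_zero
    refine ⟨x.num * c, ?_⟩
    have hnum : (x.num : ℚ) = x * x.den := by
      have := Rat.num_div_den x
      rwa [div_eq_iff hden] at this
    have hNQ : (N:ℚ) = (x.den : ℚ) * c := by exact_mod_cast hc
    rw [zsmul_eq_mul]
    push_cast
    rw [hNQ]
    field_simp
    rw [hnum]
    ring
  set f : ℤ →+ ℚ := zmultiplesHom ℚ ((1:ℚ)/(N:ℚ)) with hf
  have hfapp : ∀ n : ℤ, f n = n • ((1:ℚ)/(N:ℚ)) := fun n => rfl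
  have hfinj : Function.Injective f := by
    intro a b h
    rw [hfapp, hfapp, zsmul_eq_mul, zsmul_eq_mul] at h
    have := mul_right_cancel₀ (one_div_ne_zero hNQ0) h
    exact_mod_cast this
  have hrange : A ≤ f.range := by
    intro x hx
    obtain ⟨m, hm⟩ := hsub x hx
    exact ⟨m, by rw [hfapp]; exact hm⟩
  set B : AddSubgroup ℤ := A.comap f with hBdef
  have hmap : B.map f = A := by
    rw [hBdef, AddSubgroup.map_comap_eq]
    exact inf_eq_right.mpr hrange
  have e1 : B ≃+ A := (AddSubgroup.equivMapOfInjective B f hfinj).trans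
    (AddEquiv.addSubgroupCongr hmap)
  obtain ⟨a, hB⟩ := Int.subgroup_cyclic B
  have hB' : B = AddSubgroup.zmultiples a := by
    rw [hB, AddSubgroup.zmultiples_eq_closure]
  have hNB : (N:ℤ) ∈ B := by
    show f (N:ℤ) ∈ A
    rw [hfapp, zsmul_eq_mul]
    push_cast
    rw [mul_one_div, div_self hNQ0]
    exact h1
  have ha0 : a ≠ 0 := by
    rintro rfl
    rw [hB', AddSubgroup.zmultiples_zero_eq_bot] at hNB
    exact hN0 (by exact_mod_cast AddSubgroup.mem_bot.mp hNB)
  have haB : a ∈ B := by rw [hB']; exact AddSubgroup.mem_zmultiples a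
  set f2 : ℤ →+ B := zmultiplesHom B ⟨a, haB⟩ with hf2
  have hf2app : ∀ n : ℤ, ((f2 n : B) : ℤ) = n * a := by
    intro n
    show ((n • (⟨a, haB⟩ : B) : B) : ℤ) = n * a
    rw [AddSubgroupClass.coe_zsmul]
    exact zsmul_eq_mul a n ▸ rfl
  have hbij : Function.Bijective f2 := by
    constructor
    · intro m n h
      have : ((f2 m : B) : ℤ) = ((f2 n : B) : ℤ) := by rw [h]
      rw [hf2app, hf2app] at this
      exact mul_right_cancel₀ ha0 this
    · intro x
      have hx : (x : ℤ) ∈ AddSubgroup.zmultiples a := hB' ▸ x.2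
      obtain ⟨n, hn⟩ := AddSubgroup.mem_zmultiples_iff.mp hx
      refine ⟨n, Subtype.ext ?_⟩
      rw [hf2app]
      rw [← hn, zsmul_eq_mul]; norm_cast
  have e2 : ℤ ≃+ B := AddEquiv.ofBijective f2 hbij
  exact ⟨e1.symm.trans e2.symm⟩


/-- A rational group `A` (subgroup of `ℚ` containing 1) is isomorphic to `ℤ`
iff only finitely many primes have positive height and no height is infinite. -/
theorem rational_group_iso_int_iff (A : AddSubgroup ℚ) (h1 : (1 : ℚ) ∈ A) :
    Nonempty (A ≃+ ℤ) ↔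
      {p : ℕ | p.Prime ∧ 1 ≤ ratHeight A p}.Finite ∧
        ∀ p : ℕ, p.Prime → ratHeight A p ≠ ⊤ := by
  constructor
  · rintro ⟨e⟩
    exact forward_dir A h1 e
  · rintro ⟨hfin, htop⟩
    exact backward_dir A h1 hfin htop
end

section
/- Two additive subgroups A, B of ℚ each containing 1 are isomorphic as abelian groups if and only if there are nonzero homomorphisms A → B and B → A. -/
open Classical

namespace RatSubgroup

/-- Bezout-type lemma: if `a/b ∈ A` with `a` coprime to `b`, and `1 ∈ A`, then `1/b ∈ A`. -/
lemma bez (A : AddSubgroup ℚ) (hA1 : (1:ℚ) ∈ A) (a : ℤ) (b : ℕ)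
    (hco : Int.gcd a b = 1) (h : (a:ℚ)/(b:ℚ) ∈ A) : ((b:ℚ))⁻¹ ∈ A := by
  rcases Nat.eq_zero_or_pos b with hb | hb
  · subst hb; simpa using A.zero_mem
  have key : ((b:ℚ))⁻¹ = (Int.gcdA a b) • ((a:ℚ)/(b:ℚ)) + (Int.gcdB a b) • (1:ℚ) := by
    have hbez : (a : ℤ) * Int.gcdA a b + (b:ℤ) * Int.gcdB a b = 1 := by
      have := Int.gcd_eq_gcd_ab a b
      rw [hco] at this
      exact_mod_cast this.symm
    have hb' : (b:ℚ) ≠ 0 := by positivity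
    have := congrArg (fun z : ℤ => (z : ℚ)) hbez
    push_cast at this
    simp only [zsmul_eq_mul]; field_simp
    linear_combination -this
  rw [key]
  exact A.add_mem (A.zsmul_mem h _) (A.zsmul_mem hA1 _)


variable {A : AddSubgroup ℚ}

/-- downward closure for prime-power denominators -/
lemma down {p : ℕ} (hp : 0 < p) {j k : ℕ} (hk : k ≤ j)
    (h : ((p:ℚ)^j)⁻¹ ∈ A) : ((p:ℚ)^k)⁻¹ ∈ A := by
  have hpq : (p:ℚ) ≠ 0 := by positivity
  have key : ((p:ℚ)^k)⁻¹ = ((p^(j-k) : ℕ) : ℤ) • ((p:ℚ)^j)⁻¹ := by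
    rw [zsmul_eq_mul]
    push_cast
    have h1 : (p:ℚ)^j = p^(j-k) * p^k := by
      rw [← pow_add]
      congr 1
      omega
    rw [h1, mul_inv, ← mul_assoc, mul_inv_cancel₀ (by positivity), one_mul]
  rw [key]
  exact A.zsmul_mem h _

/-- if `x ∈ A` then `1/p^k ∈ A` for every prime power `p^k` dividing the denominator -/
lemma mem_den_pow {x : ℚ} (hx : x ∈ A) (hA1 : (1:ℚ) ∈ A) {p k : ℕ} (hp : 0 < p)
    (hdvd : p ^ k ∣ x.den) : ((p:ℚ)^k)⁻¹ ∈ A := by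
  -- first 1/x.den ∈ A
  have hden : ((x.den : ℚ))⁻¹ ∈ A := by
    have := bez A hA1 x.num x.den x.reduced ?_
    · exact this
    · rw [Rat.num_div_den]; exact hx
  obtain ⟨c, hc⟩ := hdvd
  have hdenpos : (0:ℚ) < (x.den : ℚ) := by exact_mod_cast x.pos
  have hc0 : c ≠ 0 := by
    rintro rfl
    rw [mul_zero] at hc
    exact x.den_nz hc
  have key : ((p:ℚ)^k)⁻¹ = ((c:ℕ) : ℤ) • ((x.den : ℚ))⁻¹ := by
    rw [zsmul_eq_mul]
    push_cast
    rw [hc]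
    push_cast
    have hpk : ((p:ℚ))^k ≠ 0 := by positivity
    have hcq : (c:ℚ) ≠ 0 := by exact_mod_cast hc0
    field_simp
  rw [key]
  exact A.zsmul_mem hden _


/-- splitting coprime denominators -/
lemma split (hA1 : (1:ℚ) ∈ A) {b c : ℕ} (hb : b ≠ 0) (hc : c ≠ 0)
    (hco : Nat.Coprime b c) (h1 : ((b:ℚ))⁻¹ ∈ A) (h2 : ((c:ℚ))⁻¹ ∈ A) :
    (((b*c : ℕ):ℚ))⁻¹ ∈ A := by
  obtain ⟨u, v, huv⟩ : IsCoprime (b:ℤ) (c:ℤ) := Int.isCoprime_iff_gcd_eq_one.2 (by exact_mod_cast hco)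
  have hbq : (b:ℚ) ≠ 0 := by exact_mod_cast hb
  have hcq : (c:ℚ) ≠ 0 := by exact_mod_cast hc
  have key : (((b*c : ℕ):ℚ))⁻¹ = u • ((c:ℚ))⁻¹ + v • ((b:ℚ))⁻¹ := by
    have hq : (u:ℚ) * (b:ℚ) + (v:ℚ) * (c:ℚ) = 1 := by exact_mod_cast huv
    rw [zsmul_eq_mul, zsmul_eq_mul]
    have h3 : (u:ℚ) * ((c:ℚ))⁻¹ + (v:ℚ) * ((b:ℚ))⁻¹ = ((u:ℚ)*b + v*c)/(b*c) := by
      field_simp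
    rw [h3, hq]
    push_cast
    rw [one_div]
  rw [key]
  exact A.add_mem (A.zsmul_mem h2 _) (A.zsmul_mem h1 _)

/-- backward direction of the membership criterion, for reciprocals of naturals -/
lemma crit_bwd (hA1 : (1:ℚ) ∈ A) :
    ∀ d : ℕ, d ≠ 0 → (∀ p k : ℕ, p.Prime → p ^ k ∣ d → ((p:ℚ)^k)⁻¹ ∈ A) →
      ((d:ℚ))⁻¹ ∈ A := by
  intro d
  induction d using Nat.strong_induction_on with
  | _ d ih =>
    intro hd hdiv
    rcases eq_or_ne d 1 with rfl | hd1
    · simpa using hA1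
    · have hd2 : 2 ≤ d := by omega
      set p := d.minFac with hpdef
      have hp : p.Prime := Nat.minFac_prime hd1
      set k := d.factorization p with hkdef
      have hk1 : 1 ≤ k := by
        rw [hkdef]
        exact (Nat.Prime.factorization_pos_of_dvd hp hd (Nat.minFac_dvd d))
      have hdvd : p ^ k ∣ d := Nat.ordProj_dvd d p
      set c := d / p ^ k with hcdef
      have hdc : d = p ^ k * c := (Nat.ordProj_mul_ordCompl_eq_self d p).symm
      have hc0 : c ≠ 0 := (Nat.ordCompl_pos p hd).ne'
      have hclt : c < d := by
        have : 1 < p ^ k := Nat.one_lt_pow (by omega) hp.one_lt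
        calc c = d / p^k := rfl
        _ < d := Nat.div_lt_self (by omega) this
      have hcopr : Nat.Coprime (p^k) c := Nat.Coprime.pow_left _ (Nat.coprime_ordCompl hp hd)
      have h1 : ((p:ℚ)^k)⁻¹ ∈ A := hdiv p k hp hdvd
      have h2 : ((c:ℚ))⁻¹ ∈ A := by
        apply ih c hclt hc0
        intro q j hq hqdvd
        exact hdiv q j hq (hqdvd.trans ⟨p^k, by rw [hdc]; ring⟩)
      have := split hA1 (pow_ne_zero _ hp.pos.ne') hc0 hcopr (by push_cast; exact h1) h2
      rw [← hdc] at this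
      exact this

/-- The membership criterion. -/
lemma mem_iff (hA1 : (1:ℚ) ∈ A) (x : ℚ) :
    x ∈ A ↔ ∀ p k : ℕ, p.Prime → p ^ k ∣ x.den → ((p:ℚ)^k)⁻¹ ∈ A := by
  constructor
  · intro hx p k hp hdvd
    exact mem_den_pow hx hA1 hp.pos hdvd
  · intro h
    have hden : ((x.den : ℚ))⁻¹ ∈ A := crit_bwd hA1 x.den x.den_nz h
    have key : x = x.num • ((x.den : ℚ))⁻¹ := by
      rw [zsmul_eq_mul, ← div_eq_mul_inv, Rat.num_div_den]
    rw [key]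
    exact A.zsmul_mem hden _


/-- `A` contains all `1/p^k` -/
def InfP (A : AddSubgroup ℚ) (p : ℕ) : Prop := ∀ k : ℕ, ((p:ℚ)^k)⁻¹ ∈ A

noncomputable def fIdx (A : AddSubgroup ℚ) (p : ℕ) : ℕ :=
  if h : ∃ k : ℕ, ((p:ℚ)^k)⁻¹ ∉ A then Nat.find h else 0

lemma mem_pow_iff {p : ℕ} (hp : 0 < p) (h : ¬ InfP A p) (k : ℕ) :
    ((p:ℚ)^k)⁻¹ ∈ A ↔ k < fIdx A p := by
  have hex : ∃ k : ℕ, ((p:ℚ)^k)⁻¹ ∉ A := by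
    simpa [InfP] using h
  rw [fIdx, dif_pos hex]
  constructor
  · intro hk
    by_contra hlt
    push_neg at hlt
    exact Nat.find_spec hex (down hp hlt hk)
  · intro hk
    have := Nat.find_min hex hk
    simpa using this

lemma fIdx_pos {p : ℕ} (hA1 : (1:ℚ) ∈ A) (hp : 0 < p) (h : ¬ InfP A p) : 0 < fIdx A p := by
  rw [← mem_pow_iff hp h]
  simpa using hA1

section Transfer

variable {B : AddSubgroup ℚ} {m : ℕ}

/-- transfer lemma:  going through multiplication by `m` loses at most `v_p(m)`. -/
lemma trans_pow (hB1 : (1:ℚ) ∈ B) (hm0 : m ≠ 0) (hm : ∀ x ∈ A, (m:ℚ) * x ∈ B)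
    {p : ℕ} (hp : p.Prime) (k : ℕ)
    (h : ((p:ℚ)^(k + m.factorization p))⁻¹ ∈ A) : ((p:ℚ)^k)⁻¹ ∈ B := by
  set a := m.factorization p with ha
  have hmem := hm _ h
  set m' := m / p ^ a with hm'
  have hmm : m = p ^ a * m' := (Nat.ordProj_mul_ordCompl_eq_self m p).symm
  have hm'0 : m' ≠ 0 := (Nat.ordCompl_pos p hm0).ne'
  have hco : Int.gcd (m' : ℤ) ((p^k : ℕ) : ℤ) = 1 := by
    rw [Int.gcd_natCast_natCast]
    exact ((Nat.coprime_ordCompl hp hm0).symm.pow_right k)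
  have key : (m:ℚ) * ((p:ℚ)^(k + a))⁻¹ = ((m' : ℤ) : ℚ) / (((p^k : ℕ) : ℕ) : ℚ) := by
    rw [hmm]
    push_cast
    rw [pow_add]
    have h1 : (p:ℚ) ≠ 0 := by exact_mod_cast hp.pos.ne'
    field_simp
  rw [key] at hmem
  have := bez B hB1 (m' : ℤ) (p^k) hco hmem
  push_cast at this
  exact this

lemma infP_trans (hB1 : (1:ℚ) ∈ B) (hm0 : m ≠ 0) (hm : ∀ x ∈ A, (m:ℚ) * x ∈ B)
    {p : ℕ} (hp : p.Prime) (h : InfP A p) : InfP B p :=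
  fun k => trans_pow hB1 hm0 hm hp k (h _)

lemma fIdx_le (hB1 : (1:ℚ) ∈ B) (hm0 : m ≠ 0) (hm : ∀ x ∈ A, (m:ℚ) * x ∈ B)
    {p : ℕ} (hp : p.Prime) (hA' : ¬ InfP A p) (hB' : ¬ InfP B p) :
    fIdx A p ≤ fIdx B p + m.factorization p := by
  by_contra hcon
  push_neg at hcon
  have h1 : ((p:ℚ)^(fIdx B p + m.factorization p))⁻¹ ∈ A :=
    (mem_pow_iff hp.pos hA' _).2 hcon
  have h2 := trans_pow hB1 hm0 hm hp _ h1
  rw [mem_pow_iff hp.pos hB'] at h2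
  exact lt_irrefl _ h2

end Transfer

section Valuation

lemma padicValRat_zpow_prime {l p : ℕ} (hl : l.Prime) (hp : p.Prime) (e : ℤ) :
    padicValRat l ((p:ℚ)^e) = if l = p then e else 0 := by
  haveI : Fact l.Prime := ⟨hl⟩
  have hp0 : (p:ℚ) ≠ 0 := by exact_mod_cast hp.pos.ne'
  have base : padicValRat l (p:ℚ) = if l = p then 1 else 0 := by
    rw [padicValRat.of_nat]
    split_ifs with h
    · subst h; exact_mod_cast padicValNat.self hl.one_lt
    · rw [padicValNat.eq_zero_of_not_dvd]
      · simp
      · intro hdvd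
        exact h ((Nat.prime_dvd_prime_iff_eq hl hp).1 hdvd)
  obtain ⟨n, rfl | rfl⟩ := e.eq_nat_or_neg
  · rw [zpow_natCast, padicValRat.pow _, base]
    split_ifs <;> simp
  · rw [zpow_neg, zpow_natCast, padicValRat.inv, padicValRat.pow _, base]
    split_ifs <;> simp

lemma padicValRat_prod_primes {l : ℕ} (hl : l.Prime) (F : Finset ℕ)
    (hF : ∀ p ∈ F, p.Prime) (e : ℕ → ℤ) :
    padicValRat l (∏ p ∈ F, (p:ℚ)^(e p)) = if l ∈ F then e l else 0 := by
  haveI : Fact l.Prime := ⟨hl⟩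
  classical
  induction F using Finset.induction_on with
  | empty => simp
  | @insert q F hq ih =>
    have hqp : q.Prime := hF q (Finset.mem_insert_self _ _)
    have hF' : ∀ p ∈ F, p.Prime := fun p hp => hF p (Finset.mem_insert_of_mem hp)
    have hne : ∀ p ∈ F, (p:ℚ)^(e p) ≠ 0 := by
      intro p hp
      have : (p:ℚ) ≠ 0 := by exact_mod_cast (hF' p hp).pos.ne'
      exact zpow_ne_zero _ this
    have hprodne : (∏ p ∈ F, (p:ℚ)^(e p)) ≠ 0 := Finset.prod_ne_zero_iff.2 hne
    have hqne : (q:ℚ)^(e q) ≠ 0 := zpow_ne_zero _ (by exact_mod_cast hqp.pos.ne')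
    rw [Finset.prod_insert hq, padicValRat.mul hqne hprodne, ih hF',
      padicValRat_zpow_prime hl hqp]
    by_cases h1 : l = q
    · subst h1
      simp [hq, Finset.mem_insert]
    · simp [h1, Finset.mem_insert]

/-- value of a nonzero rational at a prime dividing the denominator -/
lemma padicValRat_eq_neg {x : ℚ} (hx : x ≠ 0) {p : ℕ} (hp : p.Prime)
    (hdvd : p ∣ x.den) : padicValRat p x = -(x.den.factorization p : ℤ) := by
  haveI : Fact p.Prime := ⟨hp⟩
  have hnum : ¬ (p : ℤ) ∣ x.num := by
    intro h
    have h2 : p ∣ x.num.natAbs := Int.natCast_dvd_natCast.1 (by simpa [Int.dvd_natAbs] using h)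
    exact hp.one_lt.ne' (Nat.eq_one_of_dvd_coprimes x.reduced h2 hdvd)
  rw [padicValRat, padicValInt.eq_zero_of_not_dvd hnum, Nat.factorization_def _ hp]
  simp

lemma padicValRat_ge_neg {x : ℚ} (hx : x ≠ 0) {p : ℕ} (hp : p.Prime) :
    -(x.den.factorization p : ℤ) ≤ padicValRat p x := by
  rw [padicValRat, Nat.factorization_def _ hp]
  have : (0:ℤ) ≤ padicValInt p x.num := Int.ofNat_nonneg _
  omega

end Valuation

section Sigma

open Classical in
/-- the multiplier implementing an isomorphism `A ≃+ B` -/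
noncomputable def sigma (A B : AddSubgroup ℚ) (M : ℕ) : ℚ :=
  ∏ p ∈ M.primeFactors.filter (fun p => ¬ InfP A p),
    (p:ℚ) ^ ((fIdx A p : ℤ) - (fIdx B p : ℤ))

open Classical in
lemma sigma_ne_zero (A B : AddSubgroup ℚ) (M : ℕ) : sigma A B M ≠ 0 := by
  rw [sigma]
  apply Finset.prod_ne_zero_iff.2
  intro p hp
  have hprime : p.Prime := Nat.prime_of_mem_primeFactors (Finset.mem_filter.1 hp).1
  exact zpow_ne_zero _ (by exact_mod_cast hprime.pos.ne')

open Classical in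
lemma val_sigma (A B : AddSubgroup ℚ) (M : ℕ) {l : ℕ} (hl : l.Prime) :
    padicValRat l (sigma A B M) =
      if l ∈ M.primeFactors.filter (fun p => ¬ InfP A p)
      then (fIdx A l : ℤ) - (fIdx B l : ℤ) else 0 := by
  rw [sigma]
  exact padicValRat_prod_primes hl _
    (fun p hp => Nat.prime_of_mem_primeFactors (Finset.mem_filter.1 hp).1) _

open Classical in
lemma sigma_mem {A B : AddSubgroup ℚ} (hA1 : (1:ℚ) ∈ A) (hB1 : (1:ℚ) ∈ B)
    {m n : ℕ} (hm0 : m ≠ 0) (hn0 : n ≠ 0)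
    (hm : ∀ x ∈ A, (m:ℚ) * x ∈ B) (hn : ∀ y ∈ B, (n:ℚ) * y ∈ A) :
    ∀ x ∈ A, sigma A B (m*n) * x ∈ B := by
  intro x hx
  rcases eq_or_ne x 0 with rfl | hx0
  · simpa using B.zero_mem
  set s := sigma A B (m*n) with hs
  have hs0 : s ≠ 0 := sigma_ne_zero A B (m*n)
  have hsx0 : s * x ≠ 0 := mul_ne_zero hs0 hx0
  rw [mem_iff hB1]
  intro p k hp hdvd
  haveI : Fact p.Prime := ⟨hp⟩
  rcases Nat.eq_zero_or_pos k with rfl | hk1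
  · simpa using hB1
  by_cases hInf : InfP A p
  · exact infP_trans hB1 hm0 hm hp hInf k
  have hInfB : ¬ InfP B p := fun h => hInf (infP_trans hA1 hn0 hn hp h)
  -- denominator facts for s*x
  have hpden : p ∣ (s*x).den := (dvd_pow_self p hk1.ne').trans hdvd
  have hK : (k : ℤ) ≤ ((s*x).den.factorization p : ℤ) := by
    exact_mod_cast (Nat.Prime.pow_dvd_iff_le_factorization hp (s*x).den_nz).1 hdvd
  have hvsx : padicValRat p (s*x) ≤ -(k:ℤ) := by
    rw [padicValRat_eq_neg hsx0 hp hpden]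
    omega
  have hvmul : padicValRat p (s*x) = padicValRat p s + padicValRat p x :=
    padicValRat.mul hs0 hx0
  -- x side facts
  have hDx : x.den.factorization p < fIdx A p :=
    (mem_pow_iff hp.pos hInf _).1 (mem_den_pow hx hA1 hp.pos (Nat.ordProj_dvd _ _))
  have hvx : -(x.den.factorization p : ℤ) ≤ padicValRat p x := padicValRat_ge_neg hx0 hp
  by_cases hpF : p ∈ (m*n).primeFactors.filter (fun q => ¬ InfP A q)
  · have hvs : padicValRat p s = (fIdx A p : ℤ) - fIdx B p := by
      rw [hs, val_sigma A B (m*n) hp, if_pos hpF]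
    have hDxz : (x.den.factorization p : ℤ) < (fIdx A p : ℤ) := by exact_mod_cast hDx
    have hkB : (k:ℤ) < (fIdx B p : ℤ) := by linarith
    exact (mem_pow_iff hp.pos hInfB k).2 (by exact_mod_cast hkB)
  · have hpm : ¬ p ∣ m := by
      intro hdvd'
      exact hpF (Finset.mem_filter.2
        ⟨Nat.mem_primeFactors.2 ⟨hp, hdvd'.mul_right n, mul_ne_zero hm0 hn0⟩, hInf⟩)
    have hfm : m.factorization p = 0 := Nat.factorization_eq_zero_of_not_dvd hpm
    have hvs : padicValRat p s = 0 := by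
      rw [hs, val_sigma A B (m*n) hp, if_neg hpF]
    have hkd : k ≤ x.den.factorization p := by
      have : (k:ℤ) ≤ (x.den.factorization p : ℤ) := by linarith
      exact_mod_cast this
    have hmemA : ((p:ℚ)^k)⁻¹ ∈ A :=
      down hp.pos hkd (mem_den_pow hx hA1 hp.pos (Nat.ordProj_dvd _ _))
    exact trans_pow hB1 hm0 hm hp k (by rw [hfm, add_zero]; exact hmemA)

end Sigma

open Classical in
lemma sigma_swap {A B : AddSubgroup ℚ} (hA1 : (1:ℚ) ∈ A) (hB1 : (1:ℚ) ∈ B)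
    {m n : ℕ} (hm0 : m ≠ 0) (hn0 : n ≠ 0)
    (hm : ∀ x ∈ A, (m:ℚ) * x ∈ B) (hn : ∀ y ∈ B, (n:ℚ) * y ∈ A) :
    sigma B A (n*m) = (sigma A B (m*n))⁻¹ := by
  have hset : (m*n).primeFactors.filter (fun p => ¬ InfP B p)
      = (m*n).primeFactors.filter (fun p => ¬ InfP A p) := by
    apply Finset.filter_congr
    intro p hp
    have hprime := Nat.prime_of_mem_primeFactors hp
    constructor
    · intro hB' hA'
      exact hB' (infP_trans hB1 hm0 hm hprime hA')
    · intro hA' hB'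
      exact hA' (infP_trans hA1 hn0 hn hprime hB')
  rw [sigma, sigma, Nat.mul_comm n m, hset, ← Finset.prod_inv_distrib]
  exact Finset.prod_congr rfl (fun p hp => by rw [← zpow_neg, neg_sub])

section Hom

variable {A B : AddSubgroup ℚ}

lemma hom_apply (hA1 : (1:ℚ) ∈ A) (f : A →+ B) (x : A) :
    (f x : ℚ) = (x:ℚ) * (f ⟨1, hA1⟩ : ℚ) := by
  have hd0 : ((x:ℚ).den : ℚ) ≠ 0 := by exact_mod_cast (x:ℚ).den_nz
  have key : ((x:ℚ).den : ℤ) • x = (x:ℚ).num • (⟨1, hA1⟩ : A) := by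
    apply Subtype.ext
    push_cast
    rw [zsmul_eq_mul, zsmul_eq_mul]
    push_cast
    rw [mul_one, Rat.den_mul_eq_num]
  have h2 := congrArg (fun z : A => (f z : ℚ)) key
  simp only [map_zsmul] at h2
  push_cast at h2
  rw [zsmul_eq_mul, zsmul_eq_mul] at h2
  push_cast at h2
  have h3 : (f x : ℚ) = ((x:ℚ).num : ℚ) / ((x:ℚ).den : ℚ) * (f ⟨1, hA1⟩ : ℚ) := by
    field_simp
    linarith [h2]
  rw [h3, Rat.num_div_den]

lemma exists_nat_mul (hA1 : (1:ℚ) ∈ A) (hB1 : (1:ℚ) ∈ B) (f : A →+ B) (hf : f ≠ 0) :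
    ∃ m : ℕ, m ≠ 0 ∧ ∀ x ∈ A, (m:ℚ) * x ∈ B := by
  set q : ℚ := (f ⟨1, hA1⟩ : ℚ) with hq
  have hq0 : q ≠ 0 := by
    intro h0
    apply hf
    ext x
    rw [hom_apply hA1 f x, ← hq, h0, mul_zero]
    rfl
  refine ⟨q.num.natAbs, by simpa using Rat.num_ne_zero.2 hq0, ?_⟩
  intro x hx
  have h1 : (q.den : ℚ) * x ∈ A := by
    have := A.zsmul_mem hx (q.den : ℤ)
    rw [zsmul_eq_mul] at this
    exact_mod_cast this
  have h3 : (q.num : ℚ) * x ∈ B := by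
    have hval := hom_apply hA1 f ⟨(q.den:ℚ) * x, h1⟩
    have heq : ((q.den:ℚ) * x) * q = (q.num : ℚ) * x := by
      rw [mul_comm ((q.den:ℚ)) x, mul_assoc, mul_comm (q.den:ℚ) q, Rat.mul_den_eq_num, mul_comm]
    rw [← hq] at hval
    have hmem := (f ⟨(q.den:ℚ) * x, h1⟩).2
    rw [hval] at hmem
    simp only at hmem
    rw [heq] at hmem
    exact hmem
  rcases Int.natAbs_eq q.num with h | h
  · have hnn : (0:ℤ) ≤ q.num := by omega
    have h' : ((q.num.natAbs : ℕ) : ℚ) = (q.num : ℚ) := by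
      rw [Nat.cast_natAbs]
      exact_mod_cast abs_of_nonneg hnn
    rw [h']; exact h3
  · have hnp : q.num ≤ 0 := by omega
    have h' : ((q.num.natAbs : ℕ) : ℚ) = -(q.num : ℚ) := by
      rw [Nat.cast_natAbs]
      exact_mod_cast abs_of_nonpos hnp
    rw [h', neg_mul]; exact B.neg_mem h3

end Hom

end RatSubgroup

open RatSubgroup in
/-- Two subgroups of `ℚ` containing `1` are isomorphic as abelian groups iff
there are nonzero homomorphisms in both directions. -/
theorem rational_groups_iso_iff_nonzero_homs (A B : AddSubgroup ℚ)
    (hA : (1 : ℚ) ∈ A) (hB : (1 : ℚ) ∈ B) :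
    Nonempty (A ≃+ B) ↔ (∃ f : A →+ B, f ≠ 0) ∧ (∃ g : B →+ A, g ≠ 0) := by
  constructor
  · rintro ⟨e⟩
    have hone : (⟨1, hA⟩ : A) ≠ 0 := by
      intro h
      exact one_ne_zero (congrArg Subtype.val h)
    have hone' : (⟨1, hB⟩ : B) ≠ 0 := by
      intro h
      exact one_ne_zero (congrArg Subtype.val h)
    constructor
    · refine ⟨e.toAddMonoidHom, ?_⟩
      intro h
      have h1 : e ⟨1, hA⟩ = 0 := by
        have := congrArg (fun g : A →+ B => g ⟨1, hA⟩) h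
        simpa using this
      exact hone (e.injective (by rw [h1, map_zero]))
    · refine ⟨e.symm.toAddMonoidHom, ?_⟩
      intro h
      have h1 : e.symm ⟨1, hB⟩ = 0 := by
        have := congrArg (fun g : B →+ A => g ⟨1, hB⟩) h
        simpa using this
      exact hone' (e.symm.injective (by rw [h1, map_zero]))
  · rintro ⟨⟨f, hf⟩, ⟨g, hg⟩⟩
    obtain ⟨m, hm0, hm⟩ := exists_nat_mul hA hB f hf
    obtain ⟨n, hn0, hn⟩ := exists_nat_mul hB hA g hg
    have h1 := sigma_mem hA hB hm0 hn0 hm hn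
    have h2 := sigma_mem hB hA hn0 hm0 hn hm
    rw [sigma_swap hA hB hm0 hn0 hm hn] at h2
    set s := sigma A B (m*n) with hs
    have hs0 : s ≠ 0 := sigma_ne_zero A B (m*n)
    refine ⟨{ toFun := fun x => ⟨s * x, h1 x x.2⟩,
              invFun := fun y => ⟨s⁻¹ * y, h2 y y.2⟩,
              left_inv := fun x => Subtype.ext ?_,
              right_inv := fun y => Subtype.ext ?_,
              map_add' := fun x y => Subtype.ext ?_ }⟩
    · show s⁻¹ * (s * (x:ℚ)) = x
      rw [← mul_assoc, inv_mul_cancel₀ hs0, one_mul]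
    · show s * (s⁻¹ * (y:ℚ)) = y
      rw [← mul_assoc, mul_inv_cancel₀ hs0, one_mul]
    · show s * ((x:ℚ) + (y:ℚ)) = s * x + s * y
      ring
end

section
/- Two nonzero subgroups A, B of ℚ are isomorphic as abelian groups if and only if their height sequences (h_2, h_3, h_5, ...) are equivalent, i.e., h_p(A) = h_p(B) for all but finitely many primes p, and whenever they differ, both values are finite. -/
/-- The p-height in `A ≤ ℚ` of an element `a`: the supremum in `ℕ∞` of the
exponents `n` such that `a` is divisible by `p^n` within `A`. -/
noncomputable def elemHeight (A : AddSubgroup ℚ) (a : ℚ) (p : ℕ) : ℕ∞ :=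
  ⨆ n ∈ {n : ℕ | ∃ b ∈ A, (p : ℚ) ^ n * b = a}, (n : ℕ∞)

namespace RGH

lemma hset_iff {A : AddSubgroup ℚ} {a : ℚ} {p n : ℕ} (hp : (p:ℚ) ≠ 0) :
    (∃ b ∈ A, (p:ℚ)^n * b = a) ↔ a / (p:ℚ)^n ∈ A := by
  constructor
  · rintro ⟨b, hb, rfl⟩
    rwa [mul_comm, mul_div_assoc, div_self (pow_ne_zero _ hp), mul_one]
  · intro h
    exact ⟨a / (p:ℚ)^n, h, by field_simp⟩

lemma mem_anti {A : AddSubgroup ℚ} {a : ℚ} {p k n : ℕ} (hp : (p:ℚ) ≠ 0)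
    (hkn : k ≤ n) (h : a / (p:ℚ)^n ∈ A) : a / (p:ℚ)^k ∈ A := by
  have : a / (p:ℚ)^k = (p^(n-k) : ℕ) • (a / (p:ℚ)^n) := by
    rw [nsmul_eq_mul]
    push_cast
    have hnk : (p:ℚ)^n = (p:ℚ)^k * (p:ℚ)^(n-k) := by
      rw [← pow_add]; congr 1; omega
    rw [hnk]
    field_simp
  rw [this]
  exact nsmul_mem h _

lemma le_height_iff {A : AddSubgroup ℚ} {a : ℚ} {p : ℕ} (haA : a ∈ A) (hp : p.Prime)
    (k : ℕ) : (k:ℕ∞) ≤ elemHeight A a p ↔ a / (p:ℚ)^k ∈ A := by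
  have hp0 : (p:ℚ) ≠ 0 := Nat.cast_ne_zero.mpr hp.ne_zero
  constructor
  · intro h
    by_contra hmem
    have hk0 : k ≠ 0 := by
      rintro rfl
      simp at hmem
      exact hmem haA
    have hle : elemHeight A a p ≤ ((k-1 : ℕ) : ℕ∞) := by
      apply iSup₂_le
      intro n hn
      have hn' : a / (p:ℚ)^n ∈ A := (hset_iff hp0).mp hn
      have : n < k := by
        by_contra hc
        exact hmem (mem_anti hp0 (le_of_not_gt hc) hn')
      exact_mod_cast Nat.le_sub_one_of_lt this
    have := le_trans h hle
    rw [Nat.cast_le] at this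
    omega
  · intro h
    have : k ∈ {n : ℕ | ∃ b ∈ A, (p:ℚ)^n * b = a} := (hset_iff hp0).mpr h
    exact le_biSup _ this

lemma enat_le_of_forall {x y : ℕ∞} (h : ∀ k : ℕ, (k:ℕ∞) ≤ x → (k:ℕ∞) ≤ y) : x ≤ y := by
  induction x using ENat.recTopCoe with
  | top =>
    induction y using ENat.recTopCoe with
    | top => exact le_rfl
    | coe n =>
      have := h (n+1) le_top
      rw [Nat.cast_le] at this
      omega
  | coe n => exact h n le_rfl

lemma enat_eq_of_forall {x y : ℕ∞} (h : ∀ k : ℕ, (k:ℕ∞) ≤ x ↔ (k:ℕ∞) ≤ y) : x = y :=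
  le_antisymm (enat_le_of_forall fun k hk => (h k).mp hk)
    (enat_le_of_forall fun k hk => (h k).mpr hk)

lemma enat_top_of_forall {x : ℕ∞} (h : ∀ k : ℕ, (k:ℕ∞) ≤ x) : x = ⊤ := by
  induction x using ENat.recTopCoe with
  | top => rfl
  | coe n => have := h (n+1); rw [Nat.cast_le] at this; omega





lemma div_mul_mem {B : AddSubgroup ℚ} {b : ℚ} {m n : ℕ} (hco : Nat.Coprime m n)
    (hm : m ≠ 0) (hn : n ≠ 0)
    (h1 : b/(m:ℚ) ∈ B) (h2 : b/(n:ℚ) ∈ B) : b/((m*n : ℕ):ℚ) ∈ B := by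
  obtain ⟨u, v, huv⟩ := Nat.isCoprime_iff_coprime.mpr hco
  have hQ : (u:ℚ)*m + v*n = 1 := by exact_mod_cast congrArg (fun z : ℤ => (z:ℚ)) huv
  have key : b/((m*n : ℕ):ℚ) = u • (b/(n:ℚ)) + v • (b/(m:ℚ)) := by
    simp only [zsmul_eq_mul]
    have hm' : (m:ℚ) ≠ 0 := Nat.cast_ne_zero.mpr hm
    have hn' : (n:ℚ) ≠ 0 := Nat.cast_ne_zero.mpr hn
    push_cast
    field_simp
    linear_combination (-b) * hQ
  rw [key]
  exact add_mem (zsmul_mem h2 _) (zsmul_mem h1 _)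

lemma div_prod_mem {B : AddSubgroup ℚ} {b : ℚ} (hbB : b ∈ B) (s : Finset ℕ)
    (hs : ∀ p ∈ s, p.Prime) (k : ℕ → ℕ)
    (h : ∀ p ∈ s, b / (p:ℚ)^(k p) ∈ B) :
    b / ((∏ p ∈ s, p^(k p) : ℕ) : ℚ) ∈ B := by
  induction s using Finset.induction with
  | empty => simpa using hbB
  | @insert p s hps ih =>
    rw [Finset.prod_insert hps]
    have hp : p.Prime := hs p (Finset.mem_insert_self p s)
    have hco : Nat.Coprime (p^(k p)) (∏ q ∈ s, q^(k q)) := by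
      apply Nat.Coprime.pow_left
      apply Nat.Coprime.prod_right
      intro q hq
      have hq' : q.Prime := hs q (Finset.mem_insert_of_mem hq)
      have hpq : p ≠ q := by rintro rfl; exact hps hq
      exact Nat.Coprime.pow_right _ ((Nat.coprime_primes hp hq').mpr hpq)
    have h1 : b/((p^(k p) : ℕ):ℚ) ∈ B := by
      push_cast
      exact h p (Finset.mem_insert_self p s)
    have h2 := ih (fun q hq => hs q (Finset.mem_insert_of_mem hq))
      (fun q hq => h q (Finset.mem_insert_of_mem hq))
    have hm : p^(k p) ≠ 0 := pow_ne_zero _ hp.ne_zero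
    have hn : (∏ q ∈ s, q^(k q)) ≠ 0 :=
      Finset.prod_ne_zero_iff.mpr fun q hq => pow_ne_zero _ (hs q (Finset.mem_insert_of_mem hq)).ne_zero
    exact div_mul_mem hco hm hn h1 h2

lemma zpow_eq_div {x : ℚ} (hx : x ≠ 0) (d : ℤ) :
    x ^ d = x ^ d.toNat / x ^ (-d).toNat := by
  rcases le_or_gt 0 d with hd | hd
  · rw [Int.toNat_of_nonpos (show -d ≤ 0 by omega), pow_zero, div_one, ← zpow_natCast,
      Int.toNat_of_nonneg hd]
  · rw [Int.toNat_of_nonpos (show d ≤ 0 by omega), pow_zero, one_div,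
      ← zpow_natCast x, Int.toNat_of_nonneg (show (0:ℤ) ≤ -d by omega), ← zpow_neg, neg_neg]





lemma int_coprime_aux {p : ℕ} (hp : p.Prime) {m : ℤ} (h : ¬ (p:ℤ) ∣ m) :
    IsCoprime m (p:ℤ) := by
  rw [Int.isCoprime_iff_gcd_eq_one]
  have h' : ¬ p ∣ m.natAbs := fun hd => h (Int.natCast_dvd.mpr hd)
  have hc : Nat.Coprime m.natAbs p := Nat.coprime_comm.mp ((Nat.Prime.coprime_iff_not_dvd hp).mpr h')
  simpa [Int.gcd] using hc

lemma num_den_coprime (q : ℚ) : IsCoprime q.num (q.den : ℤ) := by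
  rw [Int.isCoprime_iff_gcd_eq_one]
  simpa [Int.gcd] using q.reduced

/-- From `x/P ∈ B` and `(m/n)x ∈ B` with `u n + v P = 1`, get `((m/n)x)/P ∈ B`. -/
lemma aux_qx_div (B : AddSubgroup ℚ) (x P : ℚ) (hP : P ≠ 0) (m : ℤ) (n : ℕ)
    (hn : (n:ℚ) ≠ 0) (u v : ℤ) (hQ : (u:ℚ)*(n:ℚ) + (v:ℚ)*P = 1)
    (h1 : x/P ∈ B) (h2 : (m:ℚ)/(n:ℚ)*x ∈ B) : ((m:ℚ)/(n:ℚ)*x)/P ∈ B := by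
  have key : ((m:ℚ)/(n:ℚ)*x)/P = (u*m) • (x/P) + v • ((m:ℚ)/(n:ℚ)*x) := by
    simp only [zsmul_eq_mul]
    push_cast
    field_simp
    linear_combination (-((m:ℚ)*x)) * hQ
  rw [key]
  exact add_mem (zsmul_mem h1 _) (zsmul_mem h2 _)

/-- From `((m/n)x)/P ∈ B` and `x ∈ B` with `u m + v (n P) = 1`, get `x/P ∈ B`. -/
lemma aux_x_div (B : AddSubgroup ℚ) (x P : ℚ) (hP : P ≠ 0) (m : ℤ) (n : ℕ)
    (hn : (n:ℚ) ≠ 0) (u v : ℤ) (hQ : (u:ℚ)*(m:ℚ) + (v:ℚ)*((n:ℚ)*P) = 1)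
    (h1 : ((m:ℚ)/(n:ℚ)*x)/P ∈ B) (h2 : x ∈ B) : x/P ∈ B := by
  have key : x/P = (n:ℤ) • (u • (((m:ℚ)/(n:ℚ)*x)/P) + v • x) := by
    simp only [zsmul_eq_mul]
    push_cast
    field_simp
    linear_combination (-x) * hQ
  rw [key]
  exact zsmul_mem (add_mem (zsmul_mem h1 _) (zsmul_mem h2 _)) _





/-- key identity for the top lemma -/
lemma aux_top (B : AddSubgroup ℚ) (x y P P' : ℚ) (hP : P ≠ 0) (hP' : P' ≠ 0)
    (m : ℤ) (n' : ℕ) (hn' : (n':ℚ) ≠ 0) (u v : ℤ)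
    (hQ : (u:ℚ)*(n':ℚ) + (v:ℚ)*P = 1)
    (hyx : y = (m:ℚ)/(P'*(n':ℚ)) * x)
    (hX : x/(P*P') ∈ B) (hy : y ∈ B) : y/P ∈ B := by
  have key : y/P = u • (m • (x/(P*P'))) + v • y := by
    simp only [zsmul_eq_mul]
    rw [hyx]
    field_simp
    ring_nf
    linear_combination (-((m:ℚ)*x)) * hQ
  rw [key]
  exact add_mem (zsmul_mem (zsmul_mem hX _) _) (zsmul_mem hy _)

lemma top_mono {B : AddSubgroup ℚ} {x y : ℚ} {p : ℕ} (hp : p.Prime)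
    (hy : y ∈ B) (hx0 : x ≠ 0)
    (htop : ∀ k : ℕ, x/(p:ℚ)^k ∈ B) (k : ℕ) : y/(p:ℚ)^k ∈ B := by
  rcases eq_or_ne y 0 with rfl | hy0
  · simpa using zero_mem B
  have hp0 : (p:ℚ) ≠ 0 := Nat.cast_ne_zero.mpr hp.ne_zero
  have hr0 : y / x ≠ 0 := div_ne_zero hy0 hx0
  obtain ⟨m, d, hd0, hyx⟩ : ∃ (m : ℤ) (d : ℕ), d ≠ 0 ∧ y = (m:ℚ)/(d:ℚ) * x :=
    ⟨(y/x).num, (y/x).den, (y/x).den_nz, by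
      rw [Rat.num_div_den (y/x), div_mul_cancel₀ _ hx0]⟩
  set α := d.factorization p with hα
  set n' := d / p ^ α with hn'def
  have hord : p ^ α * n' = d := Nat.ordProj_mul_ordCompl_eq_self d p
  have hpn' : ¬ p ∣ n' := Nat.not_dvd_ordCompl hp hd0
  have hn'0 : n' ≠ 0 := by intro h0; rw [h0, mul_zero] at hord; exact hd0 hord.symm
  have hco : Nat.Coprime n' (p ^ k) :=
    Nat.Coprime.pow_right _ (Nat.coprime_comm.mp ((Nat.Prime.coprime_iff_not_dvd hp).mpr hpn'))
  obtain ⟨u, v, huv⟩ := Nat.isCoprime_iff_coprime.mpr hco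
  have hQ : (u:ℚ)*(n':ℚ) + (v:ℚ)*((p:ℚ)^k) = 1 := by
    exact_mod_cast congrArg (fun z:ℤ => (z:ℚ)) huv
  have hdcast : (d:ℚ) = (p:ℚ)^α * (n':ℚ) := by
    exact_mod_cast congrArg (fun t:ℕ => (t:ℚ)) hord.symm
  refine aux_top B x y ((p:ℚ)^k) ((p:ℚ)^α) (pow_ne_zero _ hp0) (pow_ne_zero _ hp0)
    m n' (Nat.cast_ne_zero.mpr hn'0) u v hQ ?_ ?_ hy
  · rw [hyx, hdcast]
  · rw [← pow_add]
    exact htop (k+α)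

/-- multiplication by a rational whose numerator and denominator are prime
to `p` does not change divisibility by powers of `p`. -/
lemma mem_div_pow_iff_of_coprime {B : AddSubgroup ℚ} {x q : ℚ} {p : ℕ} (hp : p.Prime)
    (hx : x ∈ B) (hqx : q*x ∈ B) (hq0 : q ≠ 0)
    (hnum : ¬ (p:ℤ) ∣ q.num) (hden : ¬ p ∣ q.den) (k : ℕ) :
    (q*x)/(p:ℚ)^k ∈ B ↔ x/(p:ℚ)^k ∈ B := by
  have hp0 : (p:ℚ) ≠ 0 := Nat.cast_ne_zero.mpr hp.ne_zero
  have hP : (p:ℚ)^k ≠ 0 := pow_ne_zero _ hp0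
  have hnQ : (q.den:ℚ) ≠ 0 := Nat.cast_ne_zero.mpr q.den_nz
  have hqnd : q = (q.num:ℚ)/(q.den:ℚ) := (Rat.num_div_den q).symm
  constructor
  · intro h
    obtain ⟨u, v, huv⟩ :=
      (num_den_coprime q).mul_right (IsCoprime.pow_right (n := k) (int_coprime_aux hp hnum))
    have hQ : (u:ℚ)*(q.num:ℚ) + (v:ℚ)*((q.den:ℚ)*(p:ℚ)^k) = 1 := by
      exact_mod_cast congrArg (fun z:ℤ => (z:ℚ)) huv
    refine aux_x_div B x ((p:ℚ)^k) hP q.num q.den hnQ u v hQ ?_ hx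
    rwa [← hqnd]
  · intro h
    have hco : Nat.Coprime q.den (p ^ k) := Nat.Coprime.pow_right _
      (Nat.coprime_comm.mp ((Nat.Prime.coprime_iff_not_dvd hp).mpr hden))
    obtain ⟨u, v, huv⟩ := Nat.isCoprime_iff_coprime.mpr hco
    have hQ : (u:ℚ)*(q.den:ℚ) + (v:ℚ)*((p:ℚ)^k) = 1 := by
      exact_mod_cast congrArg (fun z:ℤ => (z:ℚ)) huv
    have := aux_qx_div B x ((p:ℚ)^k) hP q.num q.den hnQ u v hQ h (by rwa [← hqnd])
    rwa [← hqnd] at this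

lemma height_eq_of_coprime {B : AddSubgroup ℚ} {x q : ℚ} {p : ℕ} (hp : p.Prime)
    (hx : x ∈ B) (hqx : q*x ∈ B) (hx0 : x ≠ 0) (hq0 : q ≠ 0)
    (hnum : ¬ (p:ℤ) ∣ q.num) (hden : ¬ p ∣ q.den) :
    elemHeight B (q*x) p = elemHeight B x p := by
  apply enat_eq_of_forall
  intro k
  rw [le_height_iff hqx hp, le_height_iff hx hp]
  exact mem_div_pow_iff_of_coprime hp hx hqx hq0 hnum hden k

lemma into {A B : AddSubgroup ℚ} {a b : ℚ} (haA : a ∈ A) (ha : a ≠ 0)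
    (hbB : b ∈ B) (hb : b ≠ 0)
    (s : Finset ℕ) (hs : ∀ p ∈ s, p.Prime) (e : ℕ → ℤ)
    (he : ∀ p ∉ s, e p = 0)
    (H : ∀ p : ℕ, p.Prime → ∀ k : ℕ, (k:ℕ∞) ≤ elemHeight A a p →
      (((k : ℤ) - e p).toNat : ℕ∞) ≤ elemHeight B b p) :
    ∀ x ∈ A, (b/a) * (∏ p ∈ s, (p:ℚ)^(e p)) * x ∈ B := by
  intro x hx
  rcases eq_or_ne x 0 with rfl | hx0
  · simpa using zero_mem B
  have hr0 : x / a ≠ 0 := div_ne_zero hx0 ha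
  set m : ℤ := (x/a).num with hm
  set d : ℕ := (x/a).den with hd
  have hm0 : m ≠ 0 := Rat.num_ne_zero.mpr hr0
  have hd0 : d ≠ 0 := (x/a).den_nz
  have hdQ : (d:ℚ) ≠ 0 := Nat.cast_ne_zero.mpr hd0
  have hxa : x = (m:ℚ)/(d:ℚ) * a := by
    rw [hm, hd, Rat.num_div_den (x/a), div_mul_cancel₀ _ ha]
  -- step 1 : a / d ∈ A
  have step1 : a/(d:ℚ) ∈ A := by
    obtain ⟨u, v, huv⟩ := num_den_coprime (x/a)
    have hQ : (u:ℚ)*(m:ℚ) + (v:ℚ)*(d:ℚ) = 1 := by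
      exact_mod_cast congrArg (fun z:ℤ => (z:ℚ)) huv
    have key : a/(d:ℚ) = u • x + v • a := by
      simp only [zsmul_eq_mul]
      rw [hxa]
      field_simp
      linear_combination (-1) * hQ
    rw [key]
    exact add_mem (zsmul_mem hx _) (zsmul_mem haA _)
  set t := s ∪ d.primeFactors with ht
  have htp : ∀ p ∈ t, p.Prime := by
    intro p hp
    rcases Finset.mem_union.mp hp with h | h
    · exact hs p h
    · exact Nat.prime_of_mem_primeFactors h
  have hk : ∀ p ∈ t, ((d.factorization p : ℕ) : ℕ∞) ≤ elemHeight A a p := by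
    intro p hpt
    have hp : p.Prime := htp p hpt
    by_cases hdvd : p ∣ d
    · rw [le_height_iff haA hp]
      obtain ⟨c, hc⟩ := Nat.ordProj_dvd d p
      have hc0 : c ≠ 0 := by rintro rfl; rw [mul_zero] at hc; exact hd0 hc
      have : a/((p:ℚ)^(d.factorization p)) = (c:ℕ) • (a/(d:ℚ)) := by
        rw [nsmul_eq_mul]
        have : (d:ℚ) = (p:ℚ)^(d.factorization p) * (c:ℚ) := by exact_mod_cast congrArg (fun z:ℕ => (z:ℚ)) hc
        rw [this]
        have hpQ : (p:ℚ) ≠ 0 := Nat.cast_ne_zero.mpr hp.ne_zero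
        have hcQ : (c:ℚ) ≠ 0 := Nat.cast_ne_zero.mpr hc0
        field_simp
      rw [this]
      exact nsmul_mem step1 _
    · rw [Nat.factorization_eq_zero_of_not_dvd hdvd]
      simp
  set K : ℕ → ℕ := fun p => ((d.factorization p : ℤ) - e p).toNat with hK
  have hmem : ∀ p ∈ t, b/(p:ℚ)^(K p) ∈ B := by
    intro p hpt
    have hp := htp p hpt
    exact (le_height_iff hbB hp _).mp (H p hp _ (hk p hpt))
  have hcomb : b/((∏ p ∈ t, p^(K p) : ℕ):ℚ) ∈ B := div_prod_mem hbB t htp K hmem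
  set P : ℕ := ∏ p ∈ t, p^(K p) with hP
  set N : ℕ := ∏ p ∈ t, p^((e p - (d.factorization p:ℤ)).toNat) with hN
  have hP0 : P ≠ 0 := Finset.prod_ne_zero_iff.mpr fun p hp => pow_ne_zero _ (htp p hp).ne_zero
  have hN0 : N ≠ 0 := Finset.prod_ne_zero_iff.mpr fun p hp => pow_ne_zero _ (htp p hp).ne_zero
  have hPQ : (P:ℚ) ≠ 0 := Nat.cast_ne_zero.mpr hP0
  -- product identity
  have hF : (∏ p ∈ s, (p:ℚ)^(e p)) / (d:ℚ) = (N:ℚ)/(P:ℚ) := by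
    have h1 : (∏ p ∈ s, (p:ℚ)^(e p)) = ∏ p ∈ t, (p:ℚ)^(e p) :=
      Finset.prod_subset Finset.subset_union_left
        (fun p _ hps => by rw [he p hps, zpow_zero])
    have h2a : (∏ p ∈ d.primeFactors, p ^ d.factorization p) = d := by
      conv_rhs => rw [← Nat.factorization_prod_pow_eq_self hd0]
      rfl
    have h2b : ((∏ p ∈ d.primeFactors, p ^ d.factorization p : ℕ) : ℚ) =
        ∏ p ∈ t, ((p:ℚ))^((d.factorization p : ℕ)) := by
      push_cast
      exact Finset.prod_subset Finset.subset_union_right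
        (fun p _ hpf => by
          rw [show d.factorization p = 0 from Finsupp.notMem_support_iff.mp hpf, pow_zero])
    have h2 : (d:ℚ) = ∏ p ∈ t, ((p:ℚ))^((d.factorization p : ℕ)) := by
      rw [← h2b]
      exact_mod_cast (congrArg (fun n : ℕ => (n:ℚ)) h2a).symm
    have h3 : ∀ p ∈ t, (p:ℚ)^(e p) / (p:ℚ)^((d.factorization p:ℕ)) =
        ((p^((e p - (d.factorization p:ℤ)).toNat) : ℕ):ℚ) / ((p^(K p):ℕ):ℚ) := by
      intro p hpt
      have hpQ : (p:ℚ) ≠ 0 := Nat.cast_ne_zero.mpr (htp p hpt).ne_zero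
      rw [← zpow_natCast (p:ℚ) (d.factorization p), ← zpow_sub₀ hpQ,
        zpow_eq_div hpQ]
      push_cast
      rw [neg_sub]
    rw [h1, h2, ← Finset.prod_div_distrib, Finset.prod_congr rfl h3,
      Finset.prod_div_distrib, hN, hP]
    push_cast
    ring
  have hF' : (∏ p ∈ s, (p:ℚ)^(e p)) * (P:ℚ) = (N:ℚ) * (d:ℚ) :=
    (div_eq_div_iff hdQ hPQ).mp hF
  have hfinal : (b/a) * (∏ p ∈ s, (p:ℚ)^(e p)) * x = m • ((N:ℤ) • (b/(P:ℚ))) := by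
    simp only [zsmul_eq_mul]
    rw [hxa]
    push_cast
    field_simp
    linear_combination hF'
  rw [hfinal]
  exact zsmul_mem (zsmul_mem hcomb _) _

lemma rat_mul_den (x : ℚ) : x * (x.den:ℚ) = (x.num:ℚ) := by
  have h : (x.den:ℚ) ≠ 0 := Nat.cast_ne_zero.mpr x.den_nz
  exact ((div_eq_iff h).mp (Rat.num_div_den x)).symm

lemma hom_is_mul {A B : AddSubgroup ℚ} (f : A →+ B) {a : ℚ} (haA : a ∈ A) (ha : a ≠ 0)
    (x : ℚ) (hx : x ∈ A) : (f ⟨x, hx⟩ : ℚ) = ((f ⟨a, haA⟩ : ℚ)/a) * x := by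
  rcases eq_or_ne x 0 with rfl | hx0
  · have h0 : (⟨0, hx⟩ : A) = 0 := rfl
    rw [h0, map_zero]
    simp
  have hanum : (a.num:ℚ) ≠ 0 := Int.cast_ne_zero.mpr (Rat.num_ne_zero.mpr ha)
  have hxden : (x.den:ℚ) ≠ 0 := Nat.cast_ne_zero.mpr x.den_nz
  have key : ((x.num * (a.den:ℤ)) • (⟨a, haA⟩ : A)) = (a.num * (x.den:ℤ)) • (⟨x, hx⟩ : A) := by
    apply Subtype.ext
    have hcoe : ∀ (n : ℤ) (z : A), ((n • z : A) : ℚ) = n • (z : ℚ) := fun n z => rfl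
    rw [hcoe, hcoe]
    simp only [zsmul_eq_mul]
    push_cast
    linear_combination (x.num:ℚ) * rat_mul_den a - (a.num:ℚ) * rat_mul_den x
  have hcoeB : ∀ (n : ℤ) (z : B), ((n • z : B) : ℚ) = n • (z : ℚ) := fun n z => rfl
  have h2 : ((x.num * (a.den:ℤ))) • (f ⟨a,haA⟩ : ℚ) = (a.num * (x.den:ℤ)) • (f ⟨x,hx⟩ : ℚ) := by
    rw [← hcoeB, ← hcoeB, ← map_zsmul, ← map_zsmul, key]
  simp only [zsmul_eq_mul] at h2
  push_cast at h2
  rw [div_mul_eq_mul_div, eq_div_iff ha]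
  have h3 : ((a.num:ℚ) * (x.den:ℚ)) * ((f ⟨x, hx⟩ : ℚ) * a)
      = ((a.num:ℚ) * (x.den:ℚ)) * ((f ⟨a, haA⟩ : ℚ) * x) := by
    linear_combination (-a) * h2 + ((f ⟨a, haA⟩:ℚ) * (x.num:ℚ)) * rat_mul_den a
      - ((f ⟨a, haA⟩:ℚ) * (a.num:ℚ)) * rat_mul_den x
  exact mul_left_cancel₀ (mul_ne_zero hanum hxden) h3

end RGH

open RGH in
/-- Two nonzero subgroups of `ℚ` are isomorphic iff their height sequences
(computed at fixed nonzero elements) are equivalent: they agree at all but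
finitely many primes, and whenever they differ both values are finite. -/
theorem rational_groups_iso_iff_equivalent_height_sequences
    (A B : AddSubgroup ℚ) (a b : ℚ) (haA : a ∈ A) (ha : a ≠ 0)
    (hbB : b ∈ B) (hb : b ≠ 0) :
    Nonempty (A ≃+ B) ↔
      {p : ℕ | p.Prime ∧ elemHeight A a p ≠ elemHeight B b p}.Finite ∧
        ∀ p : ℕ, p.Prime → elemHeight A a p ≠ elemHeight B b p →
          elemHeight A a p ≠ ⊤ ∧ elemHeight B b p ≠ ⊤ := by
  constructor
  · rintro ⟨f⟩
    set c : ℚ := (f ⟨a, haA⟩ : ℚ) / a with hc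
    have hfa0 : (f ⟨a, haA⟩ : ℚ) ≠ 0 := by
      intro h0
      have : (⟨a, haA⟩ : A) = 0 := by
        apply f.injective
        apply Subtype.ext
        simpa using h0
      exact ha (congrArg Subtype.val this)
    have hc0 : c ≠ 0 := div_ne_zero hfa0 ha
    have hmul : ∀ x (hx : x ∈ A), (f ⟨x, hx⟩ : ℚ) = c * x := fun x hx =>
      hom_is_mul f.toAddMonoidHom haA ha x hx
    have hiff : ∀ x : ℚ, x ∈ A ↔ c * x ∈ B := by
      intro x
      constructor
      · intro hx
        rw [← hmul x hx]
        exact (f ⟨x, hx⟩).2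
      · intro hy
        have hx' := (f.symm ⟨c * x, hy⟩).2
        have heq : (f (f.symm ⟨c * x, hy⟩) : ℚ) = c * x := by
          rw [f.apply_symm_apply]
        have heq2 : (f (f.symm ⟨c * x, hy⟩) : ℚ)
            = c * (f.symm ⟨c * x, hy⟩ : ℚ) := by
          have := hmul (f.symm ⟨c * x, hy⟩ : ℚ) (f.symm ⟨c * x, hy⟩).2
          simpa using this
        have : ((f.symm ⟨c * x, hy⟩ : ℚ)) = x :=
          mul_left_cancel₀ hc0 (heq2.symm.trans heq)
        rw [← this]
        exact hx'
    have hca : c * a ∈ B := (hiff a).mp haA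
    have hca0 : c * a ≠ 0 := mul_ne_zero hc0 ha
    have hAeq : ∀ p : ℕ, p.Prime → elemHeight A a p = elemHeight B (c*a) p := by
      intro p hp
      apply enat_eq_of_forall
      intro k
      rw [le_height_iff haA hp, le_height_iff hca hp]
      rw [mul_div_assoc]
      exact hiff (a / (p:ℚ)^k)
    set q : ℚ := b / (c*a) with hq
    have hq0 : q ≠ 0 := div_ne_zero hb hca0
    have hqca : q * (c*a) = b := div_mul_cancel₀ _ hca0
    have hqnum : q.num ≠ 0 := Rat.num_ne_zero.mpr hq0
    constructor
    · apply Set.Finite.subset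
        (Finset.finite_toSet (q.num.natAbs.primeFactors ∪ q.den.primeFactors))
      intro p hp
      obtain ⟨hpp, hpne⟩ := hp
      simp only [Finset.coe_union, Set.mem_union, Finset.mem_coe,
        Nat.mem_primeFactors]
      by_contra hnot
      push_neg at hnot
      obtain ⟨h1, h2⟩ := hnot
      have hnd1 : ¬ p ∣ q.num.natAbs := fun hd =>
        Int.natAbs_ne_zero.mpr hqnum (h1 hpp hd)
      have hnd2 : ¬ p ∣ q.den := fun hd => q.den_nz (h2 hpp hd)
      have hnd1' : ¬ (p:ℤ) ∣ q.num := fun hd => hnd1 (Int.natCast_dvd.mp hd)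
      have := height_eq_of_coprime hpp hca (hqca ▸ hbB) hca0 hq0 hnd1' hnd2
      rw [hqca] at this
      exact hpne ((hAeq p hpp).trans this.symm)
    · intro p hpp hpne
      constructor
      · intro htopA
        apply hpne
        have htopCA : elemHeight B (c*a) p = ⊤ := (hAeq p hpp) ▸ htopA
        have hmemCA : ∀ k : ℕ, (c*a) / (p:ℚ)^k ∈ B := fun k =>
          (le_height_iff hca hpp k).mp (htopCA ▸ le_top)
        have hmemb : ∀ k : ℕ, b / (p:ℚ)^k ∈ B :=
          top_mono hpp hbB hca0 hmemCA
        have htopB : elemHeight B b p = ⊤ :=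
          enat_top_of_forall fun k => (le_height_iff hbB hpp k).mpr (hmemb k)
        rw [htopA, htopB]
      · intro htopB
        apply hpne
        have hmemb : ∀ k : ℕ, b / (p:ℚ)^k ∈ B := fun k =>
          (le_height_iff hbB hpp k).mp (htopB ▸ le_top)
        have hmemCA : ∀ k : ℕ, (c*a) / (p:ℚ)^k ∈ B :=
          top_mono hpp hca hb hmemb
        have htopCA : elemHeight B (c*a) p = ⊤ :=
          enat_top_of_forall fun k => (le_height_iff hca hpp k).mpr (hmemCA k)
        rw [htopB, hAeq p hpp, htopCA]
  · rintro ⟨hfin, hfintop⟩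
    set s : Finset ℕ := hfin.toFinset with hsdef
    have hs : ∀ p ∈ s, p.Prime := fun p hp => (hfin.mem_toFinset.mp hp).1
    set e : ℕ → ℤ := fun p => if p ∈ s then
        ((elemHeight A a p).toNat : ℤ) - ((elemHeight B b p).toNat : ℤ) else 0
      with hedef
    have he : ∀ p ∉ s, e p = 0 := by
      intro p hp
      simp only [hedef, if_neg hp]
    have he' : ∀ p ∉ s, -(e p) = 0 := by
      intro p hp
      rw [he p hp, neg_zero]
    have heqoff : ∀ p : ℕ, p.Prime → p ∉ s →
        elemHeight A a p = elemHeight B b p := by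
      intro p hpp hps
      by_contra hne
      exact hps (hfin.mem_toFinset.mpr ⟨hpp, hne⟩)
    have H1 : ∀ p : ℕ, p.Prime → ∀ k : ℕ, (k:ℕ∞) ≤ elemHeight A a p →
        (((k : ℤ) - e p).toNat : ℕ∞) ≤ elemHeight B b p := by
      intro p hpp k hk
      by_cases hps : p ∈ s
      · obtain ⟨hAt, hBt⟩ := hfintop p hpp (hfin.mem_toFinset.mp hps).2
        rw [hedef]
        simp only [if_pos hps]
        obtain ⟨zA, hzA⟩ : ∃ z : ℕ, elemHeight A a p = (z:ℕ∞) :=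
          ⟨_, (ENat.coe_toNat hAt).symm⟩
        obtain ⟨zB, hzB⟩ : ∃ z : ℕ, elemHeight B b p = (z:ℕ∞) :=
          ⟨_, (ENat.coe_toNat hBt).symm⟩
        rw [hzA] at hk
        rw [hzA, hzB]
        simp only [ENat.toNat_coe]
        rw [Nat.cast_le] at hk
        rw [Nat.cast_le]
        omega
      · rw [he p hps, ← heqoff p hpp hps]
        simpa using hk
    have H2 : ∀ p : ℕ, p.Prime → ∀ k : ℕ, (k:ℕ∞) ≤ elemHeight B b p →
        (((k : ℤ) - (-(e p))).toNat : ℕ∞) ≤ elemHeight A a p := by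
      intro p hpp k hk
      by_cases hps : p ∈ s
      · obtain ⟨hAt, hBt⟩ := hfintop p hpp (hfin.mem_toFinset.mp hps).2
        rw [hedef]
        simp only [if_pos hps]
        obtain ⟨zA, hzA⟩ : ∃ z : ℕ, elemHeight A a p = (z:ℕ∞) :=
          ⟨_, (ENat.coe_toNat hAt).symm⟩
        obtain ⟨zB, hzB⟩ : ∃ z : ℕ, elemHeight B b p = (z:ℕ∞) :=
          ⟨_, (ENat.coe_toNat hBt).symm⟩
        rw [hzB] at hk
        rw [hzA, hzB]
        simp only [ENat.toNat_coe]
        rw [Nat.cast_le] at hk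
        rw [Nat.cast_le]
        omega
      · rw [he' p hps, heqoff p hpp hps]
        simpa using hk
    have h₁ := into haA ha hbB hb s hs e he H1
    have h₂ := into hbB hb haA ha s hs (fun p => -(e p)) he' H2
    have hprod : ((b/a) * ∏ p ∈ s, (p:ℚ)^(e p)) * ((a/b) * ∏ p ∈ s, (p:ℚ)^(-(e p))) = 1 := by
      have hps0 : ∀ p ∈ s, (p:ℚ) ≠ 0 := fun p hp =>
        Nat.cast_ne_zero.mpr (hs p hp).ne_zero
      rw [mul_mul_mul_comm, div_mul_div_comm, ← Finset.prod_mul_distrib]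
      have : ∀ p ∈ s, (p:ℚ)^(e p) * (p:ℚ)^(-(e p)) = 1 := by
        intro p hp
        rw [← zpow_add₀ (hps0 p hp), add_neg_cancel, zpow_zero]
      rw [Finset.prod_congr rfl this, Finset.prod_const_one, mul_one]
      field_simp
    refine ⟨⟨⟨fun x => ⟨(b/a) * (∏ p ∈ s, (p:ℚ)^(e p)) * x.1, h₁ x.1 x.2⟩,
      fun y => ⟨(a/b) * (∏ p ∈ s, (p:ℚ)^(-(e p))) * y.1, h₂ y.1 y.2⟩, ?_, ?_⟩, ?_⟩⟩
    · intro x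
      apply Subtype.ext
      show (a/b) * (∏ p ∈ s, (p:ℚ)^(-(e p))) * ((b/a) * (∏ p ∈ s, (p:ℚ)^(e p)) * x.1) = x.1
      linear_combination (x.1 : ℚ) * hprod
    · intro y
      apply Subtype.ext
      show (b/a) * (∏ p ∈ s, (p:ℚ)^(e p)) * ((a/b) * (∏ p ∈ s, (p:ℚ)^(-(e p))) * y.1) = y.1
      linear_combination (y.1 : ℚ) * hprod
    · intro x y
      apply Subtype.ext
      show (b/a) * (∏ p ∈ s, (p:ℚ)^(e p)) * ((x:ℚ) + (y:ℚ)) = _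
      push_cast
      ring
end

section
/- If A and B are subgroups of ℚ and φ : A → B, ψ : B → A are homomorphisms with ψ ∘ φ = n·1_A for some nonzero integer n, then A and B are isomorphic as abelian groups. -/
lemma exists_pos_generator (S : AddSubgroup ℤ) {n : ℤ} (hn : n ≠ 0) (hnS : n ∈ S) :
    ∃ m : ℤ, 0 < m ∧ ∀ k, k ∈ S ↔ m ∣ k := by
  obtain ⟨g, rfl⟩ := Int.subgroup_cyclic S
  have hg : g ≠ 0 := by
    rintro rfl
    rw [AddSubgroup.mem_closure_singleton] at hnS
    obtain ⟨k, hk⟩ := hnS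
    simp at hk
    exact hn hk.symm
  refine ⟨|g|, abs_pos.2 hg, fun k => ?_⟩
  rw [AddSubgroup.mem_closure_singleton, abs_dvd]
  constructor
  · rintro ⟨j, rfl⟩; exact Dvd.intro_left j rfl
  · rintro ⟨j, rfl⟩; exact ⟨j, by rw [smul_eq_mul, mul_comm]⟩

lemma rat_pair_cyclic (a x : ℚ) : ∃ (c : ℚ) (s t u v : ℤ),
    a = (s:ℚ) * c ∧ x = (t:ℚ) * c ∧ c = (u:ℚ) * a + (v:ℚ) * x := by
  set p1 : ℤ := a.num * x.den with hp1
  set p2 : ℤ := x.num * a.den with hp2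
  set D : ℚ := (a.den : ℚ) * x.den with hDdef
  have hD : D ≠ 0 := by rw [hDdef]; positivity
  have hanum : (a.num : ℚ) = a * a.den := (a.mul_den_eq_num).symm
  have hxnum : (x.num : ℚ) = x * x.den := (x.mul_den_eq_num).symm
  have ha' : (p1 : ℚ) / D = a := by
    rw [hp1, hDdef]; push_cast; field_simp; rw [hanum]; ring
  have hx' : (p2 : ℚ) / D = x := by
    rw [hp2, hDdef]; push_cast; field_simp; rw [hxnum]; ring
  by_cases hg : Int.gcd p1 p2 = 0
  · obtain ⟨h1, h2⟩ := Int.gcd_eq_zero_iff.1 hg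
    refine ⟨0, 0, 0, 0, 0, ?_, ?_, by simp⟩
    · rw [← ha', h1]; simp
    · rw [← hx', h2]; simp
  · set g : ℤ := (Int.gcd p1 p2 : ℤ) with hgdef
    have hgQ : (g : ℚ) ≠ 0 := by
      simp [hgdef]; exact fun h1 h2 => hg (Int.gcd_eq_zero_iff.2 ⟨h1, h2⟩)
    refine ⟨(g : ℚ) / D, p1 / g, p2 / g, Int.gcdA p1 p2, Int.gcdB p1 p2, ?_, ?_, ?_⟩
    · have h1 : ((p1 / g : ℤ) : ℚ) * (g:ℚ) = (p1:ℚ) := by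
        exact_mod_cast congrArg (Int.cast : ℤ → ℚ) (Int.ediv_mul_cancel (Int.gcd_dvd_left p1 p2))
      rw [← ha', ← h1]; ring
    · have h2 : ((p2 / g : ℤ) : ℚ) * (g:ℚ) = (p2:ℚ) := by
        exact_mod_cast congrArg (Int.cast : ℤ → ℚ) (Int.ediv_mul_cancel (Int.gcd_dvd_right p1 p2))
      rw [← hx', ← h2]; ring
    · have hbez : (g : ℚ) = p1 * Int.gcdA p1 p2 + p2 * Int.gcdB p1 p2 := by
        exact_mod_cast congrArg (Int.cast : ℤ → ℚ) (Int.gcd_eq_gcd_ab p1 p2)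
      rw [← ha', ← hx', hbez]; field_simp


lemma hom_eq_mul {A B : AddSubgroup ℚ} (f : A →+ B) {a0 : ℚ} (h0 : a0 ∈ A) (h0ne : a0 ≠ 0) :
    ∀ a : A, (f a : ℚ) = ((f ⟨a0, h0⟩ : ℚ) / a0) * a := by
  intro a
  set w : ℚ := (a : ℚ) / a0 with hw
  have hwa : (a : ℚ) = w * a0 := by rw [hw, div_mul_cancel₀ _ h0ne]
  have hden : ((w.den : ℚ)) ≠ 0 := by
    exact_mod_cast w.den_ne_zero
  have keyQ : (w.den : ℚ) * (a : ℚ) = (w.num : ℚ) * a0 := by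
    rw [hwa, ← w.mul_den_eq_num]; ring
  have key : (w.den : ℤ) • a = w.num • (⟨a0, h0⟩ : A) := by
    apply Subtype.ext
    push_cast [zsmul_eq_mul]
    exact_mod_cast keyQ
  have hfQ := congrArg (fun z : B => (z : ℚ)) (congrArg f key)
  simp only [map_zsmul] at hfQ
  have hQ : (w.den : ℚ) * (f a : ℚ) = (w.num : ℚ) * (f ⟨a0, h0⟩ : ℚ) := by
    push_cast [zsmul_eq_mul] at hfQ
    exact_mod_cast hfQ
  have hnd : (w.num : ℚ) / w.den = w := w.num_div_den
  calc (f a : ℚ) = (w.num : ℚ) * (f ⟨a0, h0⟩ : ℚ) / w.den := by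
        rw [← hQ]; field_simp
    _ = ((w.num : ℚ) / w.den) * (f ⟨a0, h0⟩ : ℚ) := by ring
    _ = ((f ⟨a0, h0⟩ : ℚ) / a0) * a := by rw [hnd, hw]; field_simp

lemma between_eq_map (A C : AddSubgroup ℚ) {n : ℤ} (hn : n ≠ 0) (hCA : C ≤ A)
    (hAC : ∀ x ∈ A, (n : ℚ) * x ∈ C) :
    ∃ d : ℚ, d ≠ 0 ∧ AddSubgroup.map (AddMonoidHom.mulLeft d) A = C := by
  classical
  set N : AddSubgroup ℚ := AddSubgroup.map (AddMonoidHom.mulLeft (n:ℚ)) A with hN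
  have memN : ∀ z : ℚ, z ∈ N ↔ ∃ y ∈ A, (n:ℚ) * y = z := by
    intro z
    rw [hN, AddSubgroup.mem_map]
    simp [AddMonoidHom.mulLeft]
  -- orders
  have ord : ∀ x ∈ A, ∃ m : ℤ, 0 < m ∧ ∀ k : ℤ, ((k:ℚ) * x ∈ N ↔ m ∣ k) := by
    intro x hx
    have hnmem : n ∈ N.comap ((zmultiplesHom ℚ) x) := by
      simp only [AddSubgroup.mem_comap, zmultiplesHom_apply, zsmul_eq_mul]
      exact (memN _).2 ⟨x, hx, rfl⟩
    obtain ⟨m, hm, hmk⟩ := exists_pos_generator (N.comap ((zmultiplesHom ℚ) x)) hn hnmem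
    refine ⟨m, hm, fun k => ?_⟩
    rw [← hmk k]
    simp [AddSubgroup.mem_comap, zmultiplesHom_apply, zsmul_eq_mul]
  set Q : ℕ → Prop := fun m => ∃ x ∈ A, ∀ k : ℤ, ((k:ℚ) * x ∈ N ↔ (m:ℤ) ∣ k) with hQdef
  have hbound : ∀ m : ℕ, Q m → m ≤ n.natAbs := by
    rintro m ⟨x, hx, hxk⟩
    have h1 : (m:ℤ) ∣ n := (hxk n).1 ((memN _).2 ⟨x, hx, rfl⟩)
    have h2 : m ∣ n.natAbs := by
      rw [← Int.natAbs_natCast m]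
      exact Int.natAbs_dvd_natAbs.2 h1
    exact Nat.le_of_dvd (Int.natAbs_pos.2 hn) h2
  have hQ1 : Q 1 := ⟨0, A.zero_mem, fun k => by simp [N.zero_mem]⟩
  set M : ℕ := Nat.findGreatest Q n.natAbs with hMdef
  have hQM : Q M := Nat.findGreatest_spec (hbound 1 hQ1) hQ1
  have hM1 : 1 ≤ M := Nat.le_findGreatest (hbound 1 hQ1) hQ1
  obtain ⟨a, haA, hord⟩ := hQM
  -- generator property
  have gen : ∀ x ∈ A, ∃ j : ℤ, x - (j:ℚ) * a ∈ N := by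
    intro x hx
    obtain ⟨c, s, t, u, v, hac, hxc, hc⟩ := rat_pair_cyclic a x
    have hcA : c ∈ A := by
      rw [hc]
      exact add_mem (by simpa [zsmul_eq_mul] using A.zsmul_mem haA u)
        (by simpa [zsmul_eq_mul] using A.zsmul_mem hx v)
    obtain ⟨mc, hmc0, hmck⟩ := ord c hcA
    have hQmc : Q mc.natAbs := ⟨c, hcA, fun k => by rw [hmck k]; exact Int.natAbs_dvd.symm⟩
    have hup : mc.natAbs ≤ M := Nat.le_findGreatest (hbound _ hQmc) hQmc
    have hdnM : (M:ℤ) ∣ mc := by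
      apply (hord mc).1
      have h1 : (mc:ℚ) * c ∈ N := (hmck mc).2 dvd_rfl
      have h2 := N.zsmul_mem h1 s
      rw [zsmul_eq_mul] at h2
      have h3 : (mc:ℚ) * a = (s:ℚ) * ((mc:ℚ) * c) := by rw [hac]; ring
      rw [h3]; exact h2
    have hmcM : mc = (M:ℤ) := by
      have h2 : mc ≤ (M:ℤ) := by omega
      exact le_antisymm h2 (Int.le_of_dvd hmc0 hdnM)
    -- coprimality of s and M
    set G : ℤ := (Int.gcd s (M:ℤ) : ℤ) with hGdef
    have hGnonneg : 0 ≤ G := by rw [hGdef]; exact_mod_cast Nat.zero_le _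
    obtain ⟨M', hM'⟩ : G ∣ (M:ℤ) := Int.gcd_dvd_right s (M:ℤ)
    obtain ⟨s', hs'⟩ : G ∣ s := Int.gcd_dvd_left s (M:ℤ)
    have hMM' : (M:ℤ) ∣ M' := by
      apply (hord M').1
      have hdv : mc ∣ M' * s := by
        rw [hmcM]
        refine ⟨s', ?_⟩
        rw [hM']
        calc M' * s = M' * (G * s') := by rw [← hs']
          _ = G * M' * s' := by ring
      have h1 : ((M' * s : ℤ):ℚ) * c ∈ N := (hmck _).2 hdv
      have h2 : (M':ℚ) * a = ((M' * s : ℤ):ℚ) * c := by rw [hac]; push_cast; ring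
      rw [h2]; exact h1
    have hg'1 : G = 1 := by
      obtain ⟨w, hw⟩ := hMM'
      have hMpos : (0:ℤ) < M := by exact_mod_cast hM1
      have hMne : (M:ℤ) ≠ 0 := hMpos.ne'
      have hGw : (M:ℤ) * (G * w) = (M:ℤ) * 1 := by
        rw [mul_one]
        calc (M:ℤ) * (G * w) = G * ((M:ℤ) * w) := by ring
          _ = G * M' := by rw [← hw]
          _ = (M:ℤ) := hM'.symm
      have h1 : G * w = 1 := mul_left_cancel₀ hMne hGw
      exact Int.eq_one_of_mul_eq_one_right hGnonneg h1
    -- Bezout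
    have hbez : (1:ℤ) = s * Int.gcdA s (M:ℤ) + (M:ℤ) * Int.gcdB s (M:ℤ) := by
      rw [← hg'1, hGdef]; exact Int.gcd_eq_gcd_ab s (M:ℤ)
    set w := Int.gcdA s (M:ℤ)
    set z := Int.gcdB s (M:ℤ)
    refine ⟨t * w, ?_⟩
    have hmem : ((t * ((M:ℤ) * z) : ℤ):ℚ) * c ∈ N := by
      refine (hmck _).2 ?_
      rw [hmcM]; exact ⟨t * z, by ring⟩
    have heq : x - ((t * w : ℤ):ℚ) * a = ((t * ((M:ℤ) * z) : ℤ):ℚ) * c := by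
      rw [hxc, hac]
      have honeQ : (1:ℚ) = (s:ℚ) * w + (M:ℚ) * z := by exact_mod_cast hbez
      push_cast
      linear_combination ((t:ℚ) * c) * honeQ
    rw [heq]; exact hmem
  -- the divisor d
  have hnmemC : n ∈ C.comap ((zmultiplesHom ℚ) a) := by
    simp only [AddSubgroup.mem_comap, zmultiplesHom_apply, zsmul_eq_mul]
    exact hAC a haA
  obtain ⟨d, hd0, hdk'⟩ := exists_pos_generator (C.comap ((zmultiplesHom ℚ) a)) hn hnmemC
  have hdk : ∀ k : ℤ, ((k:ℚ) * a ∈ C ↔ d ∣ k) := by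
    intro k
    rw [← hdk' k]
    simp [AddSubgroup.mem_comap, zmultiplesHom_apply, zsmul_eq_mul]
  have hdn : d ∣ n := (hdk n).1 (hAC a haA)
  refine ⟨(d:ℚ), by exact_mod_cast hd0.ne', ?_⟩
  ext p
  rw [AddSubgroup.mem_map]
  constructor
  · rintro ⟨y, hy, rfl⟩
    obtain ⟨j, hj⟩ := gen y hy
    obtain ⟨v, hvA, hveq⟩ := (memN _).1 hj
    have h1 : ((d * j : ℤ):ℚ) * a ∈ C := (hdk _).2 (dvd_mul_right d j)
    have h2 : (n:ℚ) * ((d:ℚ) * v) ∈ C := hAC _ (by simpa [zsmul_eq_mul] using A.zsmul_mem hvA d)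
    have h3 := add_mem h1 h2
    have h4 : AddMonoidHom.mulLeft (d:ℚ) y = ((d * j : ℤ):ℚ) * a + (n:ℚ) * ((d:ℚ) * v) := by
      show (d:ℚ) * y = _
      push_cast
      linear_combination (d:ℚ) * hveq.symm
    rw [h4]; exact h3
  · intro hp
    have hpA : p ∈ A := hCA hp
    obtain ⟨j, hj⟩ := gen p hpA
    obtain ⟨y, hy, hyeq⟩ := (memN _).1 hj
    have hja : (j:ℚ) * a ∈ C := by
      have h5 : (j:ℚ) * a = p - (n:ℚ) * y := by linarith [hyeq]
      rw [h5]; exact sub_mem hp (hAC y hy)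
    obtain ⟨j', rfl⟩ := (hdk j).1 hja
    obtain ⟨n', hn'⟩ := hdn
    refine ⟨(j':ℚ) * a + (n':ℚ) * y, add_mem (by simpa [zsmul_eq_mul] using A.zsmul_mem haA j')
      (by simpa [zsmul_eq_mul] using A.zsmul_mem hy n'), ?_⟩
    show (d:ℚ) * _ = p
    have hnQ : (n:ℚ) = (d:ℚ) * n' := by exact_mod_cast hn'
    push_cast at hyeq ⊢
    linear_combination hyeq - hnQ * y


/-- Near isomorphism implies isomorphism for rank-one groups: if `A, B` are
nonzero subgroups of `ℚ` and `φ : A → B`, `ψ : B → A` satisfy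
`ψ ∘ φ = n·1_A` for some nonzero integer `n`, then `A ≅ B`. -/
theorem rank_one_nearly_iso_implies_iso
    (A B : AddSubgroup ℚ) (hA : A ≠ ⊥) (hB : B ≠ ⊥)
    (φ : A →+ B) (ψ : B →+ A) (n : ℤ) (hn : n ≠ 0)
    (h : ∀ a : A, ψ (φ a) = n • a) :
    Nonempty (A ≃+ B) := by
  obtain ⟨a0, h0, h0ne⟩ : ∃ a ∈ A, a ≠ (0:ℚ) := by
    by_contra hc
    push_neg at hc
    refine hA ?_
    ext x
    simp only [AddSubgroup.mem_bot]
    exact ⟨hc x, fun hh => hh ▸ A.zero_mem⟩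
  set q : ℚ := (φ ⟨a0, h0⟩ : ℚ) / a0 with hqdef
  have hq : ∀ a : A, (φ a : ℚ) = q * a := hom_eq_mul φ h0 h0ne
  set b0 : ℚ := (φ ⟨a0, h0⟩ : ℚ) with hb0def
  have h0B : b0 ∈ B := (φ ⟨a0, h0⟩).2
  have hcoe : ∀ a : A, ((ψ (φ a)) : ℚ) = (n : ℚ) * (a : ℚ) := by
    intro a
    rw [h a]
    push_cast
    rw [zsmul_eq_mul]
  have hb0ne : b0 ≠ 0 := by
    intro hz
    have h1 := hcoe ⟨a0, h0⟩
    have h2 : φ ⟨a0, h0⟩ = 0 := by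
      apply Subtype.ext
      exact hz
    rw [h2] at h1
    simp at h1
    rcases h1 with h1 | h1
    · exact hn (by exact_mod_cast h1)
    · exact h0ne h1
  set r : ℚ := (ψ ⟨b0, h0B⟩ : ℚ) / b0 with hrdef
  have hr : ∀ b : B, (ψ b : ℚ) = r * b := hom_eq_mul ψ h0B hb0ne
  have hrq : r * q = (n : ℚ) := by
    have h1 := hcoe ⟨a0, h0⟩
    rw [hr (φ ⟨a0, h0⟩), hq ⟨a0, h0⟩] at h1
    have := mul_right_cancel₀ h0ne (by linarith [h1] : (r * q) * a0 = (n:ℚ) * a0)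
    exact this
  have hr0 : r ≠ 0 := by
    intro hz
    rw [hz, zero_mul] at hrq
    exact hn (by exact_mod_cast hrq.symm)
  set C : AddSubgroup ℚ := AddSubgroup.map (AddMonoidHom.mulLeft r) B with hCdef
  have hCA : C ≤ A := by
    rintro z hz
    rw [hCdef, AddSubgroup.mem_map] at hz
    obtain ⟨b, hb, rfl⟩ := hz
    show r * b ∈ A
    rw [← hr ⟨b, hb⟩]
    exact (ψ ⟨b, hb⟩).2
  have hAC : ∀ x ∈ A, (n : ℚ) * x ∈ C := by
    intro x hx
    rw [hCdef, AddSubgroup.mem_map]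
    refine ⟨q * x, ?_, ?_⟩
    · rw [← hq ⟨x, hx⟩]
      exact (φ ⟨x, hx⟩).2
    · show r * (q * x) = (n:ℚ) * x
      rw [← hrq]; ring
  obtain ⟨d, hd0, hdeq⟩ := between_eq_map A C hn hCA hAC
  have hinj : ∀ (e : ℚ), e ≠ 0 → Function.Injective (AddMonoidHom.mulLeft e) := by
    intro e he x y hxy
    exact mul_left_cancel₀ he hxy
  exact ⟨((AddSubgroup.equivMapOfInjective A _ (hinj d hd0)).trans
    (AddEquiv.addSubgroupCongr hdeq)).trans
    (AddSubgroup.equivMapOfInjective B (AddMonoidHom.mulLeft r) (hinj r hr0)).symm⟩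
end
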